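/- arXiv:2206.01946 — 10 statements merged into one kernel-verified Lean document; each statement's English description precedes it below -/
import Mathlib

section
/- For every weak Büchi automaton A_w = (Q, δ, I, Q_F, ∅) and the co-Büchi automaton A_c = (Q, δ, I, Q\Q_F, ∅) obtained by swapping accepting and non-accepting states, the direct simulation relation on A_w is contained in the fair simulation relation on A_c. -/
attribute [local instance] Classical.propDecidable

universe u v

variable {A : Type u} {Q : Type v}

/-- `π` is an (infinite) trace of the transition function `δ` over the word `w`. -/
def IsTrace (δ : Q → A → Set Q) (w : ℕ → A) (π : ℕ → Q) : Prop :=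
  ∀ i, π (i + 1) ∈ δ (π i) (w i)

/-- co-Büchi acceptance: only finitely many visits to `F`. -/
def FinAcc (F : Set Q) (π : ℕ → Q) : Prop := ∃ n, ∀ m ≥ n, π m ∉ F

/-- Büchi acceptance (state-based): infinitely many visits to `F`. -/
def InfAcc (F : Set Q) (π : ℕ → Q) : Prop := ∀ n, ∃ m ≥ n, π m ∈ F

/-- Büchi acceptance with accepting states `F` and accepting transitions `δF`. -/
def BuchiAccT (F : Set Q) (δF : Set (Q × A × Q)) (w : ℕ → A) (π : ℕ → Q) : Prop :=
  ∀ n, ∃ m ≥ n, π m ∈ F ∨ (π m, w m, π (m + 1)) ∈ δF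

/-- Successors of a set of states. -/
def stepSet (δ : Q → A → Set Q) (S : Set Q) (a : A) : Set Q := ⋃ p ∈ S, δ p a

/-- The subset-construction sequence `ρ^B_α`. -/
def subsetSeq (δ : Q → A → Set Q) (w : ℕ → A) (B : Set Q) : ℕ → Set Q
  | 0 => B
  | i + 1 => stepSet δ (subsetSeq δ w B i) (w i)

/-- `Π_ρ`: the traces over `w` matching the sequence of sets `ρ` componentwise. -/
def TraceSet (δ : Q → A → Set Q) (w : ℕ → A) (ρ : ℕ → Set Q) : Set (ℕ → Q) :=
  {π | IsTrace δ w π ∧ ∀ i, π i ∈ ρ i}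

/-- `Π_ρ` contains a (co-Büchi-)accepting trace. -/
def HasAccTrace (δ : Q → A → Set Q) (F : Set Q) (w : ℕ → A) (ρ : ℕ → Set Q) : Prop :=
  ∃ π ∈ TraceSet δ w ρ, FinAcc F π

/-- `Π_ρ^∪` (the union of the trace sets of all suffixes) contains an accepting trace. -/
def HasAccTraceU (δ : Q → A → Set Q) (F : Set Q) (w : ℕ → A) (ρ : ℕ → Set Q) : Prop :=
  ∃ i, HasAccTrace δ F (fun n => w (n + i)) (fun n => ρ (n + i))

/-- Reachability in the automaton. -/
def Reaches (δ : Q → A → Set Q) : Q → Q → Prop :=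
  Relation.ReflTransGen (fun p q => ∃ a, q ∈ δ p a)

/-- The maximal SCC containing `q`. -/
def scc (δ : Q → A → Set Q) (q : Q) : Set Q :=
  {p | Reaches δ p q ∧ Reaches δ q p}

/-- Weak automaton: states of the same SCC agree on acceptance. -/
def IsWeak (δ : Q → A → Set Q) (F : Set Q) : Prop :=
  ∀ p q, Reaches δ p q → Reaches δ q p → (p ∈ F ↔ q ∈ F)

/-- Fair simulation on the co-BA `(Q, δ, _, F, ∅)`. -/
def FairSim (δ : Q → A → Set Q) (F : Set Q) (p q : Q) : Prop :=
  ∀ (w : ℕ → A) (π : ℕ → Q), π 0 = p → IsTrace δ w π → FinAcc F π →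
    ∃ π', π' 0 = q ∧ IsTrace δ w π' ∧ FinAcc F π'

/-- `R` is a direct-simulation relation on the BA `(Q, δ, _, F, ∅)`. -/
def IsDirectSim (δ : Q → A → Set Q) (F : Set Q) (R : Q → Q → Prop) : Prop :=
  ∀ p q, R p q → (p ∈ F → q ∈ F) ∧ ∀ a, ∀ p' ∈ δ p a, ∃ q' ∈ δ q a, R p' q'

/-- `p` is directly simulated by `q`. -/
def DirectSim (δ : Q → A → Set Q) (F : Set Q) (p q : Q) : Prop :=
  ∃ R, IsDirectSim δ F R ∧ R p q

/-- The relation `⊑`: fair simulation refined by the reachability conditions. -/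
def SqSub (δ : Q → A → Set Q) (F : Set Q) (p q : Q) : Prop :=
  FairSim δ F p q ∧ Reaches δ p q ∧ (¬ Reaches δ q p ∨ p = q)

/-- One step of the Miyano–Hayashi-style construction with adjustment function `θ`. -/
noncomputable def mhStep (δ : Q → A → Set Q) (F : Set Q) (θ : Set Q → Set Q)
    (m : Set Q × Set Q) (a : A) : Set Q × Set Q :=
  let S' := θ (stepSet δ m.1 a)
  (S', if m.2 = ∅ then S' \ F else (stepSet δ m.2 a ∩ S') \ F)

/-- The (unique) run of the deterministic automaton `MiHay_θ(A_c)` on `w`. -/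
noncomputable def mhRun (δ : Q → A → Set Q) (F : Set Q) (θ : Set Q → Set Q)
    (I : Set Q) (w : ℕ → A) : ℕ → Set Q × Set Q
  | 0 => (θ I, θ I \ F)
  | i + 1 => mhStep δ F θ (mhRun δ F θ I w i) (w i)

/-- `MiHay_θ(A_c)` accepts `w`: the `B`-component is empty infinitely often. -/
def MhAccepts (δ : Q → A → Set Q) (F : Set Q) (θ : Set Q → Set Q)
    (I : Set Q) (w : ℕ → A) : Prop :=
  ∀ n, ∃ m ≥ n, (mhRun δ F θ I w m).2 = (∅ : Set Q)

/-- `w ∈ L(A_c)` for the co-BA `A_c = (Q, δ, I, F, ∅)`. -/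
def CoBuchiLang (δ : Q → A → Set Q) (I F : Set Q) (w : ℕ → A) : Prop :=
  ∃ π, π 0 ∈ I ∧ IsTrace δ w π ∧ FinAcc F π

/-- `w ∈ L(A)` for the BA `A = (Q, δ, I, F, δF)`. -/
def BuchiLang (δ : Q → A → Set Q) (I F : Set Q) (δF : Set (Q × A × Q)) (w : ℕ → A) : Prop :=
  ∃ π, π 0 ∈ I ∧ IsTrace δ w π ∧ BuchiAccT F δF w π

/-- Macrostates `(N, C, S, B)` of the NCSB-MaxRank construction. -/
abbrev Macro (Q : Type v) := Set Q × Set Q × Set Q × Set Q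

/-- The successor relation `δ'` of NCSB-MaxRank. -/
noncomputable def NcsbSucc (δ : Q → A → Set Q) (Q1 Q2 F : Set Q) (δF : Set (Q × A × Q))
    (m : Macro Q) (a : A) (m' : Macro Q) : Prop :=
  (¬ ∃ p ∈ m.2.2.1, ∃ q ∈ δ p a, (p, a, q) ∈ δF) ∧
  (let N' := stepSet δ m.1 a ∩ Q1
   let S' := stepSet δ m.2.2.1 a
   let C' := ((stepSet δ m.1 a ∩ Q2) ∪ stepSet δ m.2.1 a) \ S'
   let B' := if m.2.2.2 = ∅ then C' else stepSet δ m.2.2.2 a ∩ C'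
   m' = (N', C', S', B') ∨ (B' ∩ F = ∅ ∧ m' = (N', C' \ (S' ∪ B'), S' ∪ B', (∅ : Set Q))))

/-- Well-formed macrostates of NCSB-MaxRank. -/
def NcsbState (Q1 Q2 F : Set Q) (m : Macro Q) : Prop :=
  m.1 ⊆ Q1 ∧ m.2.1 ⊆ Q2 ∧ m.2.2.1 ⊆ Q2 \ F ∧ m.2.2.2 ⊆ m.2.1

/-- `R` is a run of `NCSB-MaxRank(A)` on `w`. -/
noncomputable def NcsbRun (δ : Q → A → Set Q) (Q1 Q2 I F : Set Q) (δF : Set (Q × A × Q))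
    (w : ℕ → A) (R : ℕ → Macro Q) : Prop :=
  R 0 = (Q1 ∩ I, Q2 ∩ I, (∅ : Set Q), Q2 ∩ I) ∧
  (∀ i, NcsbState Q1 Q2 F (R i)) ∧
  ∀ i, NcsbSucc δ Q1 Q2 F δF (R i) (w i) (R (i + 1))

/-- A run of `NCSB-MaxRank(A)` is accepting: `B = ∅` infinitely often. -/
def NcsbAcc (R : ℕ → Macro Q) : Prop := ∀ n, ∃ m ≥ n, (R m).2.2.2 = (∅ : Set Q)

/-- For a weak BA `A_w = (Q, δ, I, F, ∅)` and the co-BA `A_c = (Q, δ, I, Fᶜ, ∅)`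
obtained by swapping accepting and non-accepting states, direct simulation on `A_w`
is contained in fair simulation on `A_c`. -/
theorem direct_sim_subset_fair_sim
    (δ : Q → A → Set Q) (F : Set Q) (hweak : IsWeak δ F) :
    ∀ p q : Q, DirectSim δ F p q → FairSim δ Fᶜ p q := by
  rintro p q ⟨R, hR, hpq⟩ w π hπ0 hπ hfin
  have H : ∀ n (x : Q), R (π n) x → ∃ y, y ∈ δ x (w n) ∧ R (π (n + 1)) y := by
    intro n x hx
    obtain ⟨y, hy, hRy⟩ := (hR _ _ hx).2 (w n) _ (hπ n)
    exact ⟨y, hy, hRy⟩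
  have hq0 : R (π 0) q := hπ0 ▸ hpq
  let f : ∀ n : ℕ, {x : Q // R (π n) x} := fun n =>
    Nat.rec ⟨q, hq0⟩ (fun n prev =>
      ⟨Classical.choose (H n prev.1 prev.2),
        (Classical.choose_spec (H n prev.1 prev.2)).2⟩) n
  refine ⟨fun n => (f n).1, rfl, ?_, ?_⟩
  · intro i
    exact (Classical.choose_spec (H i (f i).1 (f i).2)).1
  · obtain ⟨n, hn⟩ := hfin
    refine ⟨n, fun m hm hmem => ?_⟩
    have : π m ∈ F := by
      by_contra h
      exact hn m hm h
    exact hmem ((hR _ _ (f m).2).1 this)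
end

section
/- Let α be an infinite word and ρ, ρ' be sequences of sets of states with Π_ρ ∼ Π_{ρ'} and Π_ρ ⊆ Π_{ρ'}. Then Π_ρ ∼ Π_{ρ'}^∪, where Π_{ρ'}^∪ is the union over all i of the traces matching the suffix of ρ' starting at position i. -/
attribute [local instance] Classical.propDecidable

universe u v

variable {A : Type u} {Q : Type v}

/-- Any state in `subsetSeq δ w B' i` can be reached by a finite partial run
matching the subset sequence. -/
lemma subsetSeq_extend_back (δ : Q → A → Set Q) (w : ℕ → A) (B' : Set Q) :
    ∀ i q, q ∈ subsetSeq δ w B' i → ∃ σ : ℕ → Q, σ i = q ∧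
      (∀ j, j < i → σ (j + 1) ∈ δ (σ j) (w j)) ∧ ∀ j, j ≤ i → σ j ∈ subsetSeq δ w B' j := by
  intro i
  induction i with
  | zero =>
    intro q hq
    exact ⟨fun _ => q, rfl, fun j hj => by omega, fun j hj => by
      have : j = 0 := Nat.le_zero.mp hj; subst this; exact hq⟩
  | succ i ih =>
    intro q hq
    obtain ⟨p, hp, hpq⟩ := by
      simpa [subsetSeq, stepSet] using hq
    obtain ⟨σ, hσi, hσtr, hσmem⟩ := ih p hp
    refine ⟨fun n => if n ≤ i then σ n else q, ?_, ?_, ?_⟩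
    · simp
    · intro j hj
      by_cases h : j + 1 ≤ i
      · simp only [if_pos h, if_pos (Nat.le_of_succ_le h)]
        exact hσtr j (by omega)
      · have hji : j = i := by omega
        subst hji
        simp only [if_pos le_rfl, if_neg h, hσi]
        exact hpq
    · intro j hj
      by_cases h : j ≤ i
      · simp only [if_pos h]; exact hσmem j h
      · have : j = i + 1 := by omega
        subst this
        simp only [if_neg h]
        exact hq

/-- If `Π_ρ ∼ Π_{ρ'}` and `Π_ρ ⊆ Π_{ρ'}` for subset-construction sequences
`ρ, ρ'`, then `Π_ρ ∼ Π_{ρ'}^∪`. -/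
theorem acc_equiv_suffix_union
    (δ : Q → A → Set Q) (F : Set Q) (w : ℕ → A) (B B' : Set Q)
    (hsim : HasAccTrace δ F w (subsetSeq δ w B) ↔ HasAccTrace δ F w (subsetSeq δ w B'))
    (hsub : TraceSet δ w (subsetSeq δ w B) ⊆ TraceSet δ w (subsetSeq δ w B')) :
    HasAccTrace δ F w (subsetSeq δ w B) ↔ HasAccTraceU δ F w (subsetSeq δ w B') := by
  constructor
  · intro h
    exact ⟨0, hsim.mp h⟩
  · rintro ⟨i, π, ⟨htr, hmem⟩, N, hN⟩
    apply hsim.mpr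
    obtain ⟨σ, hσi, hσtr, hσmem⟩ :=
      subsetSeq_extend_back δ w B' i (π 0) (by simpa using hmem 0)
    refine ⟨fun n => if n ≤ i then σ n else π (n - i), ⟨?_, ?_⟩, N + i + 1, ?_⟩
    · intro n
      by_cases h : n + 1 ≤ i
      · simp only [if_pos h, if_pos (Nat.le_of_succ_le h)]
        exact hσtr n (by omega)
      · by_cases h' : n ≤ i
        · have hni : n = i := by omega
          subst hni
          simp only [if_pos le_rfl, if_neg h, hσi, Nat.add_sub_cancel_left, Nat.succ_sub_one]
          have := htr 0
          simpa using this
        · simp only [if_neg h, if_neg h']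
          have := htr (n - i)
          have e1 : n + 1 - i = (n - i) + 1 := by omega
          have e2 : (n - i) + i = n := by omega
          rw [e1]
          simpa [e2] using this
    · intro n
      by_cases h : n ≤ i
      · simp only [if_pos h]; exact hσmem n h
      · simp only [if_neg h]
        have := hmem (n - i)
        have e2 : (n - i) + i = n := by omega
        simpa [e2] using this
    · intro m hm
      have h : ¬ m ≤ i := by omega
      simp only [if_neg h]
      exact hN (m - i) (by omega)
end

section
/- For every infinite word α, Π_{ρ_α} is acc-equivalent to Π^∪_{sat(ρ_α)}, where sat is the saturation adjustment function adding to a macrostate all states fairly simulated by some member. -/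
attribute [local instance] Classical.propDecidable

universe u v

variable {A : Type u} {Q : Type v}

private lemma subsetSeq_path (δ : Q → A → Set Q) (w : ℕ → A) (I : Set Q) :
    ∀ i q, q ∈ subsetSeq δ w I i →
      ∃ p : ℕ → Q, p 0 ∈ I ∧ p i = q ∧ ∀ k < i, p (k + 1) ∈ δ (p k) (w k) := by
  intro i
  induction i with
  | zero => intro q hq; exact ⟨fun _ => q, hq, rfl, fun k hk => absurd hk (by omega)⟩
  | succ i ih =>
    intro q hq
    obtain ⟨r, hr, hq⟩ := Set.mem_iUnion₂.mp hq
    obtain ⟨p, hp0, hpi, hps⟩ := ih r hr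
    refine ⟨fun k => if k ≤ i then p k else q, by simpa using hp0, by simp, ?_⟩
    intro k hk
    rcases lt_or_ge k i with h | h
    · simpa [Nat.le_of_lt h, Nat.succ_le_of_lt h] using hps k h
    · have hk : k = i := by omega
      subst hk
      simpa [hpi] using hq

private lemma trace_mem_subsetSeq (δ : Q → A → Set Q) (w : ℕ → A) (I : Set Q)
    (σ : ℕ → Q) (h0 : σ 0 ∈ I) (ht : IsTrace δ w σ) :
    ∀ n, σ n ∈ subsetSeq δ w I n := by
  intro n
  induction n with
  | zero => exact h0
  | succ n ih => exact Set.mem_iUnion₂.mpr ⟨σ n, ih, ht n⟩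

/-- For every word, `Π_{ρ_α}` is acc-equivalent to `Π^∪_{sat(ρ_α)}`, where
`sat` adds to each macrostate all states fairly simulated by some member. -/
theorem saturation_acc_equiv
    (δ : Q → A → Set Q) (F I : Set Q) (w : ℕ → A) :
    HasAccTrace δ F w (subsetSeq δ w I) ↔
      HasAccTraceU δ F w (fun i => {p | ∃ q ∈ subsetSeq δ w I i, FairSim δ F p q}) := by
  constructor
  · rintro ⟨π, ⟨ht, hmem⟩, hfin⟩
    exact ⟨0, π, ⟨ht, fun n => ⟨π n, hmem n, fun w' π' h0 ht' hf => ⟨π', h0, ht', hf⟩⟩⟩, hfin⟩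
  · rintro ⟨i, π, ⟨ht, hmem⟩, hfin⟩
    obtain ⟨q, hq, hsim⟩ := hmem 0
    obtain ⟨π', hπ'0, hπ't, hπ'f⟩ := hsim (fun n => w (n + i)) π rfl ht hfin
    obtain ⟨p, hp0, hpi, hps⟩ := subsetSeq_path δ w I i q (by simpa using hq)
    set σ : ℕ → Q := fun n => if n < i then p n else π' (n - i) with hσ
    have hσ0 : σ 0 ∈ I := by
      rcases Nat.eq_zero_or_pos i with h | h
      · subst h; simpa [σ, hπ'0, ← hpi] using hp0
      · simpa [σ, h] using hp0
    have hσt : IsTrace δ w σ := by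
      intro n
      rcases lt_or_ge n i with h | h
      · rcases lt_or_ge (n + 1) i with h' | h'
        · simpa [σ, h, h'] using hps n h
        · have hn : n + 1 = i := by omega
          have e1 : σ (n + 1) = q := by simp [σ, h', hn, hπ'0]
          have e2 : σ n = p n := by simp [σ, h]
          rw [e1, e2, ← hpi, ← hn]
          exact hps n h
      · have h1 : ¬ n + 1 < i := by omega
        have h2 : ¬ n < i := by omega
        have := hπ't (n - i)
        have e : n - i + i = n := by omega
        have e' : n - i + 1 = n + 1 - i := by omega
        simp only [σ, if_neg h1, if_neg h2]
        rw [← e']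
        simpa [e] using this
    have hσf : FinAcc F σ := by
      obtain ⟨n, hn⟩ := hπ'f
      refine ⟨n + i, fun m hm => ?_⟩
      have h2 : ¬ m < i := by omega
      simpa [σ, h2] using hn (m - i) (by omega)
    exact ⟨σ, ⟨hσt, trace_mem_subsetSeq δ w I σ hσ0 hσt⟩, hσf⟩
end

section
/- For every co-Büchi automaton A_c, the pruning-based construction satisfies L(MiHay_pr(A_c)) = Σ^ω \ L(A_c). -/
attribute [local instance] Classical.propDecidable

universe u v

variable {A : Type u} {Q : Type v}

section MHAux

variable {A : Type u} {Q : Type v}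

lemma mhRun_zero (δ : Q → A → Set Q) (F : Set Q) (θ : Set Q → Set Q) (I : Set Q) (w : ℕ → A) :
    mhRun δ F θ I w 0 = (θ I, θ I \ F) := rfl

lemma mhRun_succ_fst (δ : Q → A → Set Q) (F : Set Q) (θ : Set Q → Set Q) (I : Set Q)
    (w : ℕ → A) (i : ℕ) :
    (mhRun δ F θ I w (i+1)).1 = θ (stepSet δ (mhRun δ F θ I w i).1 (w i)) := rfl

lemma mhRun_succ_snd (δ : Q → A → Set Q) (F : Set Q) (θ : Set Q → Set Q) (I : Set Q)
    (w : ℕ → A) (i : ℕ) :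
    (mhRun δ F θ I w (i+1)).2 =
      if (mhRun δ F θ I w i).2 = ∅ then (mhRun δ F θ I w (i+1)).1 \ F
      else (stepSet δ (mhRun δ F θ I w i).2 (w i) ∩ (mhRun δ F θ I w (i+1)).1) \ F := rfl

lemma mhB_sub (δ : Q → A → Set Q) (F : Set Q) (θ : Set Q → Set Q) (I : Set Q)
    (w : ℕ → A) : ∀ i, (mhRun δ F θ I w i).2 ⊆ (mhRun δ F θ I w i).1 \ F := by
  intro i
  cases i with
  | zero => exact fun q hq => hq
  | succ i =>
    rw [mhRun_succ_snd]
    split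
    · exact fun q hq => hq
    · exact fun q hq => ⟨hq.1.2, hq.2⟩

/-- Backward path extraction along a sequence of sets each contained in the
successors of the previous one. -/
lemma exists_backpath (δ : Q → A → Set Q) (w : ℕ → A) (T : ℕ → Set Q) (n₀ : ℕ)
    (hT : ∀ k ≥ n₀, T (k+1) ⊆ stepSet δ (T k) (w k)) :
    ∀ m, n₀ ≤ m → ∀ q ∈ T m, ∃ f : ℕ → Q, f m = q ∧
      (∀ j, n₀ ≤ j → j < m → f (j+1) ∈ δ (f j) (w j)) ∧
      (∀ j, n₀ ≤ j → j ≤ m → f j ∈ T j) := by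
  intro m hm
  induction m, hm using Nat.le_induction with
  | base =>
    intro q hq
    exact ⟨fun _ => q, rfl, fun j h1 h2 => absurd h2 (by omega), fun j h1 h2 => by
      have : j = n₀ := le_antisymm h2 h1
      simpa [this] using hq⟩
  | succ m hm ih =>
    intro q hq
    obtain ⟨p, hp, hpq⟩ := by
      have := hT m hm hq
      simpa [stepSet] using this
    obtain ⟨f, hf1, hf2, hf3⟩ := ih p hp
    refine ⟨fun j => if j = m+1 then q else f j, by simp, ?_, ?_⟩
    · intro j h1 h2
      rcases eq_or_lt_of_le (Nat.lt_succ_iff.mp h2) with h | h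
      · subst h
        simp only [if_pos rfl, if_neg (by omega : ¬ j = j + 1)]
        rwa [hf1]
      · simp only [if_neg (by omega : ¬ j + 1 = m + 1), if_neg (by omega : ¬ j = m + 1)]
        exact hf2 j h1 h
    · intro j h1 h2
      rcases eq_or_lt_of_le h2 with h | h
      · simp only [h, if_pos rfl]; exact hq
      · simp only [if_neg (by omega : ¬ j = m + 1)]
        exact hf3 j h1 (by omega)

lemma exists_unbounded_fiber [Finite Q] (g : ℕ → Q) :
    ∃ q : Q, ∀ n : ℕ, ∃ m ≥ n, g m = q := by
  obtain ⟨q, hq⟩ := Finite.exists_infinite_fiber g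
  refine ⟨q, fun n => ?_⟩
  have hinf : (g ⁻¹' {q}).Infinite := Set.infinite_coe_iff.mp hq
  obtain ⟨m, hm1, hm2⟩ := hinf.exists_gt n
  exact ⟨m, le_of_lt hm2, hm1⟩

/-- König's lemma specialised: an infinite forward trace through a sequence of
nonempty sets each contained in the successors of the previous one. -/
lemma konig_trace [Finite Q] (δ : Q → A → Set Q) (w : ℕ → A) (T : ℕ → Set Q) (n : ℕ)
    (hne : ∀ k ≥ n, (T k).Nonempty)
    (hT : ∀ k ≥ n, T (k+1) ⊆ stepSet δ (T k) (w k)) :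
    ∃ π : ℕ → Q, (∀ k, π k ∈ T (n + k)) ∧ ∀ k, π (k+1) ∈ δ (π k) (w (n + k)) := by
  classical
  have hQ : Nonempty Q := ⟨(hne n le_rfl).choose⟩
  -- persistent states
  set P : ℕ → Q → Prop := fun k q => q ∈ T k ∧ ∀ m ≥ k, ∃ f : ℕ → Q, f k = q ∧
      (∀ j, k ≤ j → j < m → f (j+1) ∈ δ (f j) (w j)) ∧
      (∀ j, k ≤ j → j ≤ m → f j ∈ T j) with hP
  have claim1 : ∃ q, P n q := by
    have hg : ∀ m : ℕ, ∃ f : ℕ → Q, (m ≥ n → (f n ∈ T n ∧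
        (∀ j, n ≤ j → j < m → f (j+1) ∈ δ (f j) (w j)) ∧
        (∀ j, n ≤ j → j ≤ m → f j ∈ T j))) := by
      intro m
      by_cases hm : m ≥ n
      · obtain ⟨q, hq⟩ := hne m hm
        obtain ⟨f, hf1, hf2, hf3⟩ := exists_backpath δ w T n hT m hm q hq
        exact ⟨f, fun _ => ⟨hf3 n le_rfl hm, hf2, hf3⟩⟩
      · exact ⟨fun _ => hQ.some, fun h => absurd h hm⟩
    choose f hf using hg
    obtain ⟨q, hq⟩ := exists_unbounded_fiber (fun m => f m n)
    refine ⟨q, ?_, ?_⟩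
    · obtain ⟨m, hm1, hm2⟩ := hq n
      rw [← hm2]; exact (hf m hm1).1
    · intro m' hm'
      obtain ⟨m, hm1, hm2⟩ := hq m'
      obtain ⟨h1, h2, h3⟩ := hf m (le_trans hm' hm1)
      exact ⟨f m, hm2, fun j hj1 hj2 => h2 j hj1 (lt_of_lt_of_le hj2 hm1),
        fun j hj1 hj2 => h3 j hj1 (le_trans hj2 hm1)⟩
  have claim2 : ∀ k, n ≤ k → ∀ q, P k q → ∃ q', q' ∈ δ q (w k) ∧ P (k+1) q' := by
    intro k hk q hq
    have hg : ∀ m : ℕ, ∃ f : ℕ → Q, (m ≥ k + 1 → (f k = q ∧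
        (∀ j, k ≤ j → j < m → f (j+1) ∈ δ (f j) (w j)) ∧
        (∀ j, k ≤ j → j ≤ m → f j ∈ T j))) := by
      intro m
      by_cases hm : m ≥ k + 1
      · obtain ⟨f, hf⟩ := hq.2 m (le_trans (Nat.le_succ k) hm)
        exact ⟨f, fun _ => hf⟩
      · exact ⟨fun _ => hQ.some, fun h => absurd h hm⟩
    choose f hf using hg
    obtain ⟨q', hq'⟩ := exists_unbounded_fiber (fun m => f m (k+1))
    have hmem : q' ∈ δ q (w k) ∧ q' ∈ T (k+1) := by
      obtain ⟨m, hm1, hm2⟩ := hq' (k+1)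
      obtain ⟨h1, h2, h3⟩ := hf m hm1
      constructor
      · rw [← hm2, ← h1]; exact h2 k le_rfl (by omega)
      · rw [← hm2]; exact h3 (k+1) (Nat.le_succ k) hm1
    refine ⟨q', hmem.1, hmem.2, ?_⟩
    intro m' hm'
    obtain ⟨m, hm1, hm2⟩ := hq' m'
    obtain ⟨h1, h2, h3⟩ := hf m (le_trans hm' hm1)
    exact ⟨f m, hm2, fun j hj1 hj2 => h2 j (le_trans (Nat.le_succ k) hj1) (lt_of_lt_of_le hj2 hm1),
      fun j hj1 hj2 => h3 j (le_trans (Nat.le_succ k) hj1) (le_trans hj2 hm1)⟩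
  choose nxt hnxt1 hnxt2 using claim2
  obtain ⟨q0, hq0⟩ := claim1
  let seq : ∀ k : ℕ, {q : Q // P (n + k) q} := fun k =>
    Nat.rec ⟨q0, hq0⟩ (fun k ih => ⟨nxt (n + k) (Nat.le_add_right n k) ih.1 ih.2,
      hnxt2 (n + k) (Nat.le_add_right n k) ih.1 ih.2⟩) k
  refine ⟨fun k => (seq k).1, fun k => (seq k).2.1, fun k => ?_⟩
  exact hnxt1 (n + k) (Nat.le_add_right n k) (seq k).1 (seq k).2

end MHAux
section MHAux2

variable {A : Type u} {Q : Type v}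

lemma lang_of_not_mh [Finite Q]
    (δ : Q → A → Set Q) (I F : Set Q) (pr : Set Q → Set Q)
    (hpr₁ : ∀ S, pr S ⊆ S) (w : ℕ → A)
    (h : ¬ MhAccepts δ F pr I w) : CoBuchiLang δ I F w := by
  classical
  set ρ : ℕ → Set Q := fun k => (mhRun δ F pr I w k).1 with hρ
  set B : ℕ → Set Q := fun k => (mhRun δ F pr I w k).2 with hB
  rw [MhAccepts] at h
  push_neg at h
  obtain ⟨n, hn⟩ := h
  have hBsub : ∀ k, B k ⊆ ρ k \ F := fun k => mhB_sub δ F pr I w k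
  have hBstep : ∀ k ≥ n, B (k+1) ⊆ stepSet δ (B k) (w k) := by
    intro k hk
    have := mhRun_succ_snd δ F pr I w k
    rw [if_neg (Set.nonempty_iff_ne_empty.mp (hn k hk))] at this
    intro q hq
    rw [hB] at hq
    simp only [this] at hq
    exact hq.1.1
  have hne : ∀ k ≥ n, (B k).Nonempty := hn
  obtain ⟨π, hπB, hπstep⟩ := konig_trace δ w B n hne hBstep
  have hρstep : ∀ k ≥ 0, ρ (k+1) ⊆ stepSet δ (ρ k) (w k) := by
    intro k _
    have := mhRun_succ_fst δ F pr I w k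
    intro q hq
    rw [hρ] at hq
    simp only [this] at hq
    exact hpr₁ _ hq
  have hπ0 : π 0 ∈ ρ n := (hBsub n (by simpa using hπB 0)).1
  obtain ⟨f, hf1, hf2, hf3⟩ := exists_backpath δ w ρ 0 hρstep n (Nat.zero_le n) (π 0) hπ0
  refine ⟨fun j => if j < n then f j else π (j - n), ?_, ?_, n, ?_⟩
  · -- initial
    have hρ0 : ρ 0 ⊆ I := by
      have : ρ 0 = pr I := rfl
      rw [this]; exact hpr₁ I
    by_cases h0 : 0 < n
    · simp only [if_pos h0]
      exact hρ0 (hf3 0 le_rfl (Nat.zero_le n))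
    · have hn0 : n = 0 := by omega
      simp only [if_neg h0]
      apply hρ0
      have := (hBsub 0 (by simpa [hn0] using hπB 0)).1
      simpa using this
  · -- trace
    intro j
    by_cases hj1 : j + 1 < n
    · simp only [if_pos hj1, if_pos (by omega : j < n)]
      exact hf2 j (Nat.zero_le j) (by omega)
    · by_cases hj2 : j + 1 = n
      · simp only [if_neg hj1, if_pos (by omega : j < n)]
        have : π (j + 1 - n) = f (j + 1) := by
          rw [hj2, Nat.sub_self, hf1]
        rw [this]
        exact hf2 j (Nat.zero_le j) (by omega)
      · have hjn : n ≤ j := by omega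
        simp only [if_neg (by omega : ¬ j + 1 < n), if_neg (by omega : ¬ j < n)]
        have e1 : j + 1 - n = (j - n) + 1 := by omega
        have e2 : n + (j - n) = j := by omega
        rw [e1]
        have := hπstep (j - n)
        rwa [e2] at this
  · -- finitely accepting
    intro m hm
    simp only [if_neg (by omega : ¬ m < n)]
    exact (hBsub (n + (m - n)) (hπB (m - n))).2

end MHAux2
section MHAux3

variable {A : Type u} {Q : Type v}

/-- Invariant for the corrected-run construction: `x.1` is a state of the pruned
subset sequence at time `i` and `x.2` is an accepting trace of the suffix
automaton starting in `x.1`. -/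
def MhGood (δ : Q → A → Set Q) (F : Set Q) (ρ : ℕ → Set Q) (w : ℕ → A)
    (i : ℕ) (x : Q × (ℕ → Q)) : Prop :=
  x.1 ∈ ρ i ∧ x.2 0 = x.1 ∧ IsTrace δ (fun m => w (m + i)) x.2 ∧ FinAcc F x.2

lemma not_lang_of_mh [Finite Q]
    (δ : Q → A → Set Q) (I F : Set Q) (pr : Set Q → Set Q)
    (hpr₂ : ∀ S, ∀ q ∈ S, ∃ q' ∈ pr S, SqSub δ F q q')
    (w : ℕ → A) (hmh : MhAccepts δ F pr I w) : ¬ CoBuchiLang δ I F w := by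
  classical
  rintro ⟨π0, hI, hTr0, hFin0⟩
  set ρ : ℕ → Set Q := fun k => (mhRun δ F pr I w k).1 with hρdef
  set B : ℕ → Set Q := fun k => (mhRun δ F pr I w k).2 with hBdef
  -- base case
  obtain ⟨q0, hq0ρ, hq0sq⟩ := hpr₂ I (π0 0) hI
  obtain ⟨τ0, hτ00, hτ0tr, hτ0F⟩ := hq0sq.1 w π0 rfl hTr0 hFin0
  have good0 : MhGood δ F ρ w 0 (q0, τ0) := by
    refine ⟨hq0ρ, hτ00, ?_, hτ0F⟩
    intro m; simpa using hτ0tr m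
  -- the correction step
  have step : ∀ i x, MhGood δ F ρ w i x → ∃ y, MhGood δ F ρ w (i+1) y ∧
      SqSub δ F (x.2 1) y.1 ∧ (y.1 = x.2 1 → y.2 = fun m => x.2 (m+1)) := by
    intro i x hx
    obtain ⟨hx1, hx2, hx3, hx4⟩ := hx
    have hs : x.2 1 ∈ δ x.1 (w i) := by
      have := hx3 0
      rw [hx2] at this
      simpa using this
    have hsS : x.2 1 ∈ stepSet δ (ρ i) (w i) := by
      simp only [stepSet, Set.mem_iUnion]
      exact ⟨x.1, hx1, hs⟩
    obtain ⟨q', hq'1, hq'2⟩ := hpr₂ _ _ hsS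
    have hq'ρ : q' ∈ ρ (i+1) := hq'1
    have hsh : IsTrace δ (fun m => w (m + (i+1))) (fun m => x.2 (m+1)) := by
      intro m
      show x.2 (m + 1 + 1) ∈ δ (x.2 (m + 1)) (w (m + (i + 1)))
      have e : m + (i + 1) = m + 1 + i := by omega
      rw [e]
      exact hx3 (m+1)
    have hshF : FinAcc F (fun m => x.2 (m+1)) := by
      obtain ⟨N, hN⟩ := hx4
      exact ⟨N, fun m hm => hN (m+1) (by omega)⟩
    by_cases he : q' = x.2 1
    · refine ⟨(q', fun m => x.2 (m+1)), ⟨hq'ρ, he.symm, hsh, hshF⟩, hq'2, fun _ => rfl⟩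
    · obtain ⟨τ', hτ'0, hτ'tr, hτ'F⟩ := hq'2.1 (fun m => w (m + (i+1)))
        (fun m => x.2 (m+1)) rfl hsh hshF
      exact ⟨(q', τ'), ⟨hq'ρ, hτ'0, hτ'tr, hτ'F⟩, hq'2, fun h => absurd h he⟩
  choose nxt h1 h2 h3 using step
  let seq : ∀ i : ℕ, {x : Q × (ℕ → Q) // MhGood δ F ρ w i x} := fun i =>
    Nat.rec ⟨(q0, τ0), good0⟩ (fun i ih => ⟨nxt i ih.1 ih.2, h1 i ih.1 ih.2⟩) i
  set q : ℕ → Q := fun i => (seq i).1.1 with hq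
  set τ : ℕ → ℕ → Q := fun i => (seq i).1.2 with hτ
  have hGood : ∀ i, MhGood δ F ρ w i (q i, τ i) := fun i => (seq i).2
  have hSq : ∀ i, SqSub δ F (τ i 1) (q (i+1)) := fun i => h2 i (seq i).1 (seq i).2
  have hShift : ∀ i, q (i+1) = τ i 1 → τ (i+1) = fun m => τ i (m+1) :=
    fun i => h3 i (seq i).1 (seq i).2
  have hs_step : ∀ i, τ i 1 ∈ δ (q i) (w i) := by
    intro i
    have := (hGood i).2.2.1 0
    rw [(hGood i).2.1] at this
    simpa using this
  have hreach : ∀ i, Reaches δ (q i) (q (i+1)) := by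
    intro i
    exact Relation.ReflTransGen.head ⟨w i, hs_step i⟩ (hSq i).2.1
  have hreach_le : ∀ i j, i ≤ j → Reaches δ (q i) (q j) := by
    intro i j hij
    induction j, hij using Nat.le_induction with
    | base => exact Relation.ReflTransGen.refl
    | succ j hij ih => exact ih.trans (hreach j)
  -- the set of replacement steps is finite
  have hRfin : {i : ℕ | q (i+1) ≠ τ i 1}.Finite := by
    by_contra hinf
    have hinf : {i : ℕ | q (i+1) ≠ τ i 1}.Infinite := hinf
    have hinj : Set.InjOn (fun i => τ i 1) {i : ℕ | q (i+1) ≠ τ i 1} := by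
      intro i hi j hj hij
      have hij : τ i 1 = τ j 1 := hij
      by_contra hne
      rcases Nat.lt_or_ge i j with h | h
      · have hnr : ¬ Reaches δ (q (i+1)) (τ i 1) := by
          rcases (hSq i).2.2 with h' | h'
          · exact h'
          · exact absurd h'.symm hi
        have : Reaches δ (q (i+1)) (τ j 1) :=
          (hreach_le (i+1) j h).tail ⟨w j, hs_step j⟩
        rw [← hij] at this
        exact hnr this
      · have hji : j < i := by omega
        have hnr : ¬ Reaches δ (q (j+1)) (τ j 1) := by
          rcases (hSq j).2.2 with h' | h'
          · exact h'
          · exact absurd h'.symm hj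
        have : Reaches δ (q (j+1)) (τ i 1) :=
          (hreach_le (j+1) i hji).tail ⟨w i, hs_step i⟩
        rw [hij] at this
        exact hnr this
    exact Set.not_infinite.mpr (Set.toFinite _) (hinf.image hinj)
  obtain ⟨b, hb⟩ := hRfin.bddAbove
  set i₀ : ℕ := b + 1 with hi₀
  have hstable : ∀ i, i₀ ≤ i → q (i+1) = τ i 1 := by
    intro i hi
    by_contra hne
    have := hb (Set.mem_setOf_eq ▸ hne : i ∈ {i : ℕ | q (i+1) ≠ τ i 1})
    omega
  have h7 : ∀ n m, τ (i₀ + n) m = τ i₀ (m + n) := by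
    intro n
    induction n with
    | zero => intro m; rfl
    | succ n ih =>
      intro m
      have hsh := hShift (i₀ + n) (hstable (i₀ + n) (Nat.le_add_right i₀ n))
      show τ (i₀ + n + 1) m = τ i₀ (m + (n + 1))
      have : τ (i₀ + n + 1) m = τ (i₀ + n) (m + 1) := by rw [hsh]
      rw [this, ih (m+1)]
      congr 1
      omega
  have hmem : ∀ n, τ i₀ n ∈ ρ (i₀ + n) := by
    intro n
    have e1 := h7 n 0
    have e2 : τ (i₀ + n) 0 = q (i₀ + n) := (hGood (i₀ + n)).2.1
    have := (hGood (i₀ + n)).1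
    rw [← e2, e1] at this
    simpa using this
  have hTrτ : IsTrace δ (fun m => w (m + i₀)) (τ i₀) := (hGood i₀).2.2.1
  obtain ⟨N, hN⟩ := (hGood i₀).2.2.2
  -- derive the contradiction with acceptance of MiHay
  obtain ⟨m₁, hm₁1, hm₁2⟩ := hmh (i₀ + N)
  have claim : ∀ k, m₁ + 1 ≤ k → τ i₀ (k - i₀) ∈ B k := by
    intro k hk
    induction k, hk using Nat.le_induction with
    | base =>
      have hBeq : B (m₁ + 1) = ρ (m₁ + 1) \ F := by
        rw [hBdef]
        simp only
        rw [mhRun_succ_snd, if_pos hm₁2]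
    
      rw [hBeq]
      constructor
      · have := hmem (m₁ + 1 - i₀)
        have e : i₀ + (m₁ + 1 - i₀) = m₁ + 1 := by omega
        rwa [e] at this
      · exact hN (m₁ + 1 - i₀) (by omega)
    | succ k hk ih =>
      have hBne : B k ≠ ∅ := by
        intro h
        rw [h] at ih
        exact ih
      have hBeq : B (k + 1) = (stepSet δ (B k) (w k) ∩ ρ (k + 1)) \ F := by
        rw [hBdef]
        simp only
        rw [mhRun_succ_snd, if_neg hBne]
      rw [hBeq]
      have e : k + 1 - i₀ = (k - i₀) + 1 := by omega
      rw [e]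
      refine ⟨⟨?_, ?_⟩, ?_⟩
      · have hstep2 : τ i₀ (k - i₀ + 1) ∈ δ (τ i₀ (k - i₀)) (w (k - i₀ + i₀)) :=
          hTrτ (k - i₀)
        have e2 : k - i₀ + i₀ = k := by omega
        rw [e2] at hstep2
        simp only [stepSet, Set.mem_iUnion]
        exact ⟨τ i₀ (k - i₀), ih, hstep2⟩
      · have := hmem (k - i₀ + 1)
        have e3 : i₀ + (k - i₀ + 1) = k + 1 := by omega
        rwa [e3] at this
      · exact hN (k - i₀ + 1) (by omega)
  obtain ⟨m₂, hm₂1, hm₂2⟩ := hmh (m₁ + 1)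
  have := claim m₂ hm₂1
  rw [show B m₂ = (∅ : Set Q) from hm₂2] at this
  exact this

end MHAux3

/-- The pruning-based Miyano–Hayashi construction is correct:
`L(MiHay_pr(A_c)) = Σ^ω \ L(A_c)`. -/
theorem mihay_pruning_correct [Finite Q]
    (δ : Q → A → Set Q) (I F : Set Q)
    (pr : Set Q → Set Q)
    (hpr₁ : ∀ S, pr S ⊆ S)
    (hpr₂ : ∀ S, ∀ q ∈ S, ∃ q' ∈ pr S, SqSub δ F q q') :
    ∀ w : ℕ → A, MhAccepts δ F pr I w ↔ ¬ CoBuchiLang δ I F w := by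
  intro w
  constructor
  · exact fun h => not_lang_of_mh δ I F pr hpr₂ w h
  · intro h
    by_contra hmh
    exact h (lang_of_not_mh δ I F pr hpr₁ w hmh)
end

section
/- For every co-Büchi automaton A_c, the saturation-based construction satisfies L(MiHay_sat(A_c)) = Σ^ω \ L(A_c). -/
attribute [local instance] Classical.propDecidable

universe u v

variable {A : Type u} {Q : Type v}

/-! ### Auxiliary lemmas -/

lemma fairSim_refl (δ : Q → A → Set Q) (F : Set Q) (p : Q) : FairSim δ F p p :=
  fun _ π h0 ht hf => ⟨π, h0, ht, hf⟩

/-- Finite forward paths staying inside the sequence of sets `B`. -/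
def PathN (δ : Q → A → Set Q) (a : ℕ → A) (B : ℕ → Set Q) (k j : ℕ) (q : Q) : Prop :=
  ∃ f : ℕ → Q, f 0 = q ∧ (∀ i < j, f (i + 1) ∈ δ (f i) (a (k + i))) ∧ ∀ i ≤ j, f i ∈ B (k + i)

lemma pathN_mono {δ : Q → A → Set Q} {a : ℕ → A} {B : ℕ → Set Q} {k j j' : ℕ} {q : Q}
    (h : PathN δ a B k j q) (hle : j' ≤ j) : PathN δ a B k j' q := by
  obtain ⟨f, h0, h1, h2⟩ := h
  exact ⟨f, h0, fun i hi => h1 i (lt_of_lt_of_le hi hle), fun i hi => h2 i (le_trans hi hle)⟩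

lemma pathN_exists (δ : Q → A → Set Q) (a : ℕ → A) (B : ℕ → Set Q)
    (hne : ∀ k, (B k).Nonempty) (hstep : ∀ k, B (k + 1) ⊆ stepSet δ (B k) (a k)) :
    ∀ j k, ∃ p, PathN δ a B k j p := by
  intro j
  induction j with
  | zero =>
    intro k
    obtain ⟨p, hp⟩ := hne k
    refine ⟨p, fun _ => p, rfl, fun i hi => absurd hi (Nat.not_lt_zero i), fun i hi => ?_⟩
    obtain rfl : i = 0 := Nat.le_zero.mp hi
    exact hp
  | succ j ih =>
    intro k
    obtain ⟨p', f, hf0, hf1, hf2⟩ := ih (k + 1)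
    have hp'B : p' ∈ B (k + 1) := by have := hf2 0 (Nat.zero_le _); rwa [hf0] at this
    have : p' ∈ stepSet δ (B k) (a k) := hstep k hp'B
    simp only [stepSet, Set.mem_iUnion] at this
    obtain ⟨p, hpB, hp'δ⟩ := this
    refine ⟨p, fun i => match i with | 0 => p | i + 1 => f i, rfl, ?_, ?_⟩
    · intro i hi
      match i with
      | 0 => simpa [hf0] using hp'δ
      | i + 1 =>
        have h := hf1 i (by omega)
        have e : k + (i + 1) = (k + 1) + i := by omega
        rw [e]; exact h
    · intro i hi
      match i with
      | 0 => exact hpB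
      | i + 1 =>
        have h := hf2 i (by omega)
        have e : k + (i + 1) = (k + 1) + i := by omega
        rw [e]; exact h

/-- König-style lemma: from a sequence of nonempty sets each of which steps into the
next, extract an infinite trace. -/
lemma exists_inf_trace [Finite Q] (δ : Q → A → Set Q) (a : ℕ → A) (B : ℕ → Set Q)
    (hne : ∀ k, (B k).Nonempty) (hstep : ∀ k, B (k + 1) ⊆ stepSet δ (B k) (a k)) :
    ∃ σ : ℕ → Q, (∀ k, σ k ∈ B k) ∧ ∀ k, σ (k + 1) ∈ δ (σ k) (a k) := by
  classical
  set Live : ℕ → Set Q := fun k => {q | ∀ j, PathN δ a B k j q} with hLive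
  have hLiveB : ∀ k, ∀ q ∈ Live k, q ∈ B k := by
    intro k q hq
    obtain ⟨f, h0, _, h2⟩ := hq 0
    have := h2 0 le_rfl
    rwa [h0] at this
  have hLivene : ∀ k, (Live k).Nonempty := by
    intro k
    choose g hg using fun j => pathN_exists δ a B hne hstep j k
    obtain ⟨q, hq⟩ := Finite.exists_infinite_fiber g
    have hq2 := Set.infinite_coe_iff.mp hq
    refine ⟨q, fun j => ?_⟩
    obtain ⟨j', hmem, hlt⟩ := hq2.exists_gt j
    have hgj : g j' = q := hmem
    rw [← hgj]
    exact pathN_mono (hg j') (le_of_lt hlt)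
  have hsucc : ∀ k, ∀ q ∈ Live k, ∃ q', q' ∈ Live (k + 1) ∧ q' ∈ δ q (a k) := by
    intro k q hq
    have hstep1 : ∀ j, ∃ q', q' ∈ δ q (a k) ∧ PathN δ a B (k + 1) j q' := by
      intro j
      obtain ⟨f, h0, h1, h2⟩ := hq (j + 1)
      refine ⟨f 1, by rw [← h0]; simpa using h1 0 (by omega), ?_⟩
      refine ⟨fun i => f (i + 1), rfl, fun i hi => ?_, fun i hi => ?_⟩
      · have h := h1 (i + 1) (by omega)
        have e : (k + 1) + i = k + (i + 1) := by omega
        rw [e]; exact h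
      · have h := h2 (i + 1) (by omega)
        have e : (k + 1) + i = k + (i + 1) := by omega
        rw [e]; exact h
    choose g hg1 hg2 using hstep1
    obtain ⟨q', hq'⟩ := Finite.exists_infinite_fiber g
    have hq2 := Set.infinite_coe_iff.mp hq'
    refine ⟨q', fun j => ?_, ?_⟩
    · obtain ⟨j', hmem, hlt⟩ := hq2.exists_gt j
      have hgj : g j' = q' := hmem
      rw [← hgj]
      exact pathN_mono (hg2 j') (le_of_lt hlt)
    · obtain ⟨j', hmem, _⟩ := hq2.exists_gt 0
      have hgj : g j' = q' := hmem
      rw [← hgj]; exact hg1 j'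
  choose nxt hn1 hn2 using hsucc
  let σs : ∀ k : ℕ, {q // q ∈ Live k} := fun k =>
    Nat.rec ⟨(hLivene 0).choose, (hLivene 0).choose_spec⟩
      (fun k p => ⟨nxt k p.1 p.2, hn1 k p.1 p.2⟩) k
  exact ⟨fun k => (σs k).1, fun k => hLiveB k _ (σs k).2, fun k => hn2 k (σs k).1 (σs k).2⟩

/-- The saturation-based Miyano–Hayashi construction is correct:
`L(MiHay_sat(A_c)) = Σ^ω \ L(A_c)`, where `sat(S) = {p | ∃ q ∈ S, p ⊑_f q}`. -/
theorem mihay_saturation_correct [Finite Q]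
    (δ : Q → A → Set Q) (I F : Set Q) :
    ∀ w : ℕ → A,
      MhAccepts δ F (fun S => {p | ∃ q ∈ S, FairSim δ F p q}) I w ↔
        ¬ CoBuchiLang δ I F w := by
  classical
  intro w
  set sat : Set Q → Set Q := fun S => {p | ∃ q ∈ S, FairSim δ F p q} with hsat
  set ρ : ℕ → Set Q × Set Q := mhRun δ F sat I w with hρ
  have hsub : ∀ S : Set Q, S ⊆ sat S := fun S p hp => ⟨p, hp, fairSim_refl δ F p⟩
  have hS0 : (ρ 0).1 = sat I := rfl
  have hSstep : ∀ i, (ρ (i + 1)).1 = sat (stepSet δ (ρ i).1 (w i)) := fun i => rfl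
  have hBstepdef : ∀ i, (ρ (i + 1)).2 =
      if (ρ i).2 = ∅ then (ρ (i + 1)).1 \ F
      else (stepSet δ (ρ i).2 (w i) ∩ (ρ (i + 1)).1) \ F := fun i => rfl
  -- B-components stay inside the S-components and avoid F
  have hBsub : ∀ m, (ρ m).2 ⊆ (ρ m).1 \ F := by
    intro m
    match m with
    | 0 => exact Set.Subset.rfl
    | m + 1 =>
      rw [hBstepdef m]
      by_cases h : (ρ m).2 = ∅
      · rw [if_pos h]
      · rw [if_neg h]
        exact Set.diff_subset_diff_left Set.inter_subset_right
  constructor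
  · -- MhAccepts → ¬ L(A_c)
    intro hMH hL
    obtain ⟨π, hπI, hπt, n, hn⟩ := hL
    have hπS : ∀ i, π i ∈ (ρ i).1 := by
      intro i
      induction i with
      | zero => exact hsub I hπI
      | succ i ih =>
        rw [hSstep i]
        refine hsub _ ?_
        simp only [stepSet, Set.mem_iUnion]
        exact ⟨π i, ih, hπt i⟩
    have hkeep : ∀ j, n ≤ j → π j ∈ (ρ j).2 → π (j + 1) ∈ (ρ (j + 1)).2 := by
      intro j hj hmem
      have hne : (ρ j).2 ≠ ∅ := by
        intro h; rw [h] at hmem; exact hmem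
      rw [hBstepdef j, if_neg hne]
      refine ⟨⟨?_, hπS (j + 1)⟩, hn (j + 1) (by omega)⟩
      simp only [stepSet, Set.mem_iUnion]
      exact ⟨π j, hmem, hπt j⟩
    obtain ⟨m, hm, hm2⟩ := hMH n
    have hstart : π (m + 1) ∈ (ρ (m + 1)).2 := by
      rw [hBstepdef m, if_pos hm2]
      exact ⟨hπS (m + 1), hn (m + 1) (by omega)⟩
    have hall : ∀ k, π (m + 1 + k) ∈ (ρ (m + 1 + k)).2 := by
      intro k
      induction k with
      | zero => exact hstart
      | succ k ih => exact hkeep (m + 1 + k) (by omega) ih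
    obtain ⟨m', hm', hm'2⟩ := hMH (m + 1)
    have := hall (m' - (m + 1))
    have e : m + 1 + (m' - (m + 1)) = m' := by omega
    rw [e, hm'2] at this
    exact this
  · -- ¬ L(A_c) → MhAccepts
    intro hnL
    by_contra hMH
    simp only [MhAccepts, not_forall] at hMH
    obtain ⟨n, hn⟩ := hMH
    push_neg at hn
    have hn' : ∀ m, n ≤ m → ((ρ m).2).Nonempty := fun m hm => hn m hm
    have hn'' : ∀ m, n ≤ m → (ρ m).2 ≠ ∅ := fun m hm =>
      Set.nonempty_iff_ne_empty.mp (hn' m hm)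
    -- the sequence of B-components from n+1 on
    set B' : ℕ → Set Q := fun k => (ρ (n + 1 + k)).2 with hB'
    set a : ℕ → A := fun k => w (n + 1 + k) with ha
    have hBne : ∀ k, (B' k).Nonempty := fun k => hn' (n + 1 + k) (by omega)
    have hBstep : ∀ k, B' (k + 1) ⊆ stepSet δ (B' k) (a k) := by
      intro k
      have hne : (ρ (n + 1 + k)).2 ≠ ∅ := hn'' (n + 1 + k) (by omega)
      have : B' (k + 1) = (stepSet δ (ρ (n + 1 + k)).2 (w (n + 1 + k)) ∩
          (ρ (n + 1 + k + 1)).1) \ F := by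
        show (ρ (n + 1 + k + 1)).2 = _
        rw [hBstepdef (n + 1 + k), if_neg hne]
      rw [this]
      exact (Set.diff_subset).trans Set.inter_subset_left
    obtain ⟨σ, hσB, hσδ⟩ := exists_inf_trace δ a B' hBne hBstep
    -- pull the accepting trace back to I through the saturation layers
    have pull : ∀ i, ∀ p ∈ (ρ i).1,
        (∃ π : ℕ → Q, π 0 = p ∧ IsTrace δ (fun k => w (k + i)) π ∧ FinAcc F π) →
        CoBuchiLang δ I F w := by
      intro i
      induction i with
      | zero =>
        rintro p hp ⟨π, h0, ht, hf⟩
        obtain ⟨q, hqI, hsim⟩ := hp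
        obtain ⟨π', h0', ht', hf'⟩ := hsim (fun k => w (k + 0)) π h0 ht hf
        exact ⟨π', h0' ▸ hqI, ht', hf'⟩
      | succ i ih =>
        rintro p hp ⟨π, h0, ht, hf⟩
        rw [hSstep i] at hp
        obtain ⟨q, hq, hsim⟩ := hp
        obtain ⟨π', h0', ht', hf'⟩ := hsim (fun k => w (k + (i + 1))) π h0 ht hf
        simp only [stepSet, Set.mem_iUnion] at hq
        obtain ⟨r, hr, hqr⟩ := hq
        refine ih r hr ⟨fun k => match k with | 0 => r | k + 1 => π' k, rfl, ?_, ?_⟩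
        · intro k
          match k with
          | 0 =>
            show π' 0 ∈ δ r (w (0 + i))
            rw [h0', Nat.zero_add]
            exact hqr
          | k + 1 =>
            show π' (k + 1) ∈ δ (π' k) (w ((k + 1) + i))
            have h := ht' k
            have e : k + (i + 1) = (k + 1) + i := by omega
            simp only [e] at h
            exact h
        · obtain ⟨N, hN⟩ := hf'
          refine ⟨N + 1, fun m hm => ?_⟩
          match m with
          | 0 => omega
          | m + 1 => exact hN m (by omega)
    have hσF : ∀ k, σ k ∉ F := fun k => (hBsub (n + 1 + k) (hσB k)).2
    have hσS : σ 0 ∈ (ρ (n + 1)).1 := (hBsub (n + 1) (hσB 0)).1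
    refine hnL (pull (n + 1) (σ 0) hσS ⟨σ, rfl, ?_, 0, fun m _ => hσF m⟩)
    intro k
    have h := hσδ k
    have e : n + 1 + k = k + (n + 1) := by omega
    show σ (k + 1) ∈ δ (σ k) (w (k + (n + 1)))
    rw [← e]
    exact h
end

section
/- Soundness of NCSB-MaxRank: if an infinite word α is accepted by a semi-deterministic Büchi automaton A, then no run of NCSB-MaxRank(A) on α visits macrostates with empty B-component infinitely often; hence α ∉ L(NCSB-MaxRank(A)). -/
attribute [local instance] Classical.propDecidable

universe u v

variable {A : Type u} {Q : Type v}

lemma mem_stepSet {δ : Q → A → Set Q} {S : Set Q} {a : A} {x : Q} :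
    x ∈ stepSet δ S a ↔ ∃ p ∈ S, x ∈ δ p a := by
  simp [stepSet]

/-- Soundness of NCSB-MaxRank: if `α ∈ L(A)`, then no run of `NCSB-MaxRank(A)`
on `α` visits macrostates with empty `B`-component infinitely often. -/
theorem ncsb_maxrank_sound [Finite Q]
    (δ : Q → A → Set Q) (Q1 Q2 I F : Set Q) (δF : Set (Q × A × Q))
    (hpart : Q1 = Q2ᶜ)
    (hclosed : ∀ q ∈ Q2, ∀ a, δ q a ⊆ Q2)
    (hdet : ∀ q ∈ Q2, ∀ a, (δ q a).Subsingleton)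
    (hF : F ⊆ Q2)
    (hδF : ∀ p a q, (p, a, q) ∈ δF → q ∈ δ p a ∧ q ∈ Q2)
    (w : ℕ → A) (hw : BuchiLang δ I F δF w) :
    ∀ R : ℕ → Macro Q, NcsbRun δ Q1 Q2 I F δF w R → ¬ NcsbAcc R := by
  intro R hR hAcc
  obtain ⟨π, hπI, hπtr, hπacc⟩ := hw
  obtain ⟨hR0, hSt, hSucc⟩ := hR
  -- eventually `π` is in `Q2`
  obtain ⟨m1, -, hm1⟩ := hπacc 0
  have hQ2base : π (m1 + 1) ∈ Q2 := by
    rcases hm1 with h | h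
    · exact hclosed _ (hF h) _ (hπtr m1)
    · exact (hδF _ _ _ h).2
  have hQ2 : ∀ j, m1 + 1 ≤ j → π j ∈ Q2 := by
    intro j hj
    induction j, hj using Nat.le_induction with
    | base => exact hQ2base
    | succ j hj ih => exact hclosed _ ih _ (hπtr j)
  -- the S-component absorbs its successors
  have stepS : ∀ i, stepSet δ ((R i).2.2.1) (w i) ⊆ (R (i + 1)).2.2.1 := by
    intro i
    obtain ⟨-, hc⟩ := hSucc i
    rcases hc with h | ⟨-, h⟩
    · rw [h]
    · rw [h]; exact Set.subset_union_left
  -- `π` never visits the S-component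
  have notS : ∀ i, π i ∉ (R i).2.2.1 := by
    intro i hi
    have hpers : ∀ j, i ≤ j → π j ∈ (R j).2.2.1 := by
      intro j hj
      induction j, hj using Nat.le_induction with
      | base => exact hi
      | succ j hj ih => exact stepS j (mem_stepSet.2 ⟨π j, ih, hπtr j⟩)
    obtain ⟨m, hm, hcase⟩ := hπacc i
    rcases hcase with hFm | hδFm
    · exact ((hSt m).2.2.1 (hpers m hm)).2 hFm
    · exact (hSucc m).1 ⟨π m, hpers m hm, π (m + 1), hπtr m, hδFm⟩
  -- `π` stays in the N- or C-components
  have inNC : ∀ i, π i ∈ (R i).1 ∪ (R i).2.1 := by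
    intro i
    induction i with
    | zero =>
      rw [hR0]
      by_cases h2 : π 0 ∈ Q2
      · exact Or.inr ⟨h2, hπI⟩
      · exact Or.inl ⟨by rw [hpart]; exact h2, hπI⟩
    | succ i ih =>
      have hxS' : π (i + 1) ∉ stepSet δ ((R i).2.2.1) (w i) := fun h =>
        notS (i + 1) (stepS i h)
      have hC' : π (i + 1) ∈ (stepSet δ ((R i).1) (w i) ∩ Q2) ∪ stepSet δ ((R i).2.1) (w i) →
          π (i + 1) ∈ (((stepSet δ ((R i).1) (w i) ∩ Q2) ∪ stepSet δ ((R i).2.1) (w i)) \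
            stepSet δ ((R i).2.2.1) (w i)) := fun h => ⟨h, hxS'⟩
      have hmem : π (i + 1) ∈ (stepSet δ ((R i).1) (w i) ∩ Q1) ∪
          ((stepSet δ ((R i).1) (w i) ∩ Q2) ∪ stepSet δ ((R i).2.1) (w i)) := by
        rcases ih with hN | hC
        · have hx : π (i + 1) ∈ stepSet δ ((R i).1) (w i) := mem_stepSet.2 ⟨π i, hN, hπtr i⟩
          by_cases h2 : π (i + 1) ∈ Q2
          · exact Or.inr (Or.inl ⟨hx, h2⟩)
          · exact Or.inl ⟨hx, by rw [hpart]; exact h2⟩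
        · exact Or.inr (Or.inr (mem_stepSet.2 ⟨π i, hC, hπtr i⟩))
      obtain ⟨-, hc⟩ := hSucc i
      rcases hc with h | ⟨-, h⟩
      · rw [h]
        rcases hmem with hN | hC
        · exact Or.inl hN
        · exact Or.inr (hC' hC)
      · rw [h]
        have hxS2 : π (i + 1) ∉ (R (i + 1)).2.2.1 := notS (i + 1)
        rw [h] at hxS2
        rcases hmem with hN | hC
        · exact Or.inl hN
        · exact Or.inr ⟨hC' hC, hxS2⟩
  have inC : ∀ j, m1 + 1 ≤ j → π j ∈ (R j).2.1 := by
    intro j hj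
    rcases inNC j with h | h
    · have h1 := (hSt j).1 h
      rw [hpart] at h1
      exact absurd (hQ2 j hj) h1
    · exact h
  -- the B-component traps `π` once it empties
  have stepB : ∀ i, m1 + 1 ≤ i → ((R i).2.2.2 = ∅ ∨ π i ∈ (R i).2.2.2) →
      π (i + 1) ∈ (R (i + 1)).2.2.2 := by
    intro i hi hB
    have hxC : π (i + 1) ∈ (R (i + 1)).2.1 := inC (i + 1) (le_trans hi (Nat.le_succ i))
    have hxB' : ((R i).2.2.2 ≠ ∅ → π (i + 1) ∈ stepSet δ ((R i).2.2.2) (w i)) := by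
      intro hne
      rcases hB with hB0 | hBx
      · exact absurd hB0 hne
      · exact mem_stepSet.2 ⟨π i, hBx, hπtr i⟩
    obtain ⟨-, hc⟩ := hSucc i
    rcases hc with h | ⟨-, h⟩
    · rw [h] at hxC ⊢
      show π (i + 1) ∈ if (R i).2.2.2 = ∅ then _ else _
      by_cases hB0 : (R i).2.2.2 = ∅
      · rw [if_pos hB0]; exact hxC
      · rw [if_neg hB0]; exact ⟨hxB' hB0, hxC⟩
    · rw [h] at hxC
      exfalso
      apply hxC.2
      refine Or.inr ?_
      show π (i + 1) ∈ if (R i).2.2.2 = ∅ then _ else _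
      by_cases hB0 : (R i).2.2.2 = ∅
      · rw [if_pos hB0]; exact hxC.1
      · rw [if_neg hB0]; exact ⟨hxB' hB0, hxC.1⟩
  obtain ⟨m0, hm0, hB0⟩ := hAcc (m1 + 1)
  have inB : ∀ j, m0 + 1 ≤ j → π j ∈ (R j).2.2.2 := by
    intro j hj
    induction j, hj using Nat.le_induction with
    | base => exact stepB m0 hm0 (Or.inl hB0)
    | succ j hj ih =>
      exact stepB j (le_trans (le_trans hm0 (Nat.le_succ m0)) hj) (Or.inr ih)
  obtain ⟨m, hm, hBm⟩ := hAcc (m0 + 1)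
  have := inB m hm
  rw [hBm] at this
  exact this
end

section
/- Completeness of NCSB-MaxRank: if an infinite word α is not accepted by a semi-deterministic Büchi automaton A, then NCSB-MaxRank(A) has an infinite run on α that visits macrostates with empty B-component infinitely often; hence α ∈ L(NCSB-MaxRank(A)). -/
attribute [local instance] Classical.propDecidable

universe u v

variable {A : Type u} {Q : Type v}

namespace NcsbAux

variable {A : Type u} {Q : Type v}

lemma mem_stepSet {δ : Q → A → Set Q} {S : Set Q} {a : A} {p : Q} :
    p ∈ stepSet δ S a ↔ ∃ q ∈ S, p ∈ δ q a := by
  simp [stepSet]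

lemma stepSet_mono {δ : Q → A → Set Q} {X Y : Set Q} (h : X ⊆ Y) (a : A) :
    stepSet δ X a ⊆ stepSet δ Y a := by
  intro p hp
  rw [mem_stepSet] at hp ⊢
  obtain ⟨q, hq, hpq⟩ := hp
  exact ⟨q, h hq, hpq⟩

lemma subsetSeq_mono {δ : Q → A → Set Q} {w : ℕ → A} {X Y : Set Q} (h : X ⊆ Y) :
    ∀ k, subsetSeq δ w X k ⊆ subsetSeq δ w Y k
  | 0 => h
  | k + 1 => stepSet_mono (subsetSeq_mono h k) _

lemma subsetSeq_shift (δ : Q → A → Set Q) (w : ℕ → A) (X : Set Q) (k : ℕ) :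
    ∀ k', subsetSeq δ (fun n => w (n + k)) (subsetSeq δ w X k) k' = subsetSeq δ w X (k + k')
  | 0 => rfl
  | k' + 1 => by
    show stepSet δ (subsetSeq δ (fun n => w (n + k)) (subsetSeq δ w X k) k') (w (k' + k))
      = stepSet δ (subsetSeq δ w X (k + k')) (w (k + k'))
    rw [subsetSeq_shift δ w X k k', Nat.add_comm k' k]

lemma subsetSeq_subset {δ : Q → A → Set Q} {Q2 : Set Q}
    (hclosed : ∀ q ∈ Q2, ∀ a, δ q a ⊆ Q2) {w : ℕ → A} {X : Set Q} (hX : X ⊆ Q2) :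
    ∀ k, subsetSeq δ w X k ⊆ Q2
  | 0 => hX
  | k + 1 => by
    intro p hp
    rw [show subsetSeq δ w X (k+1) = stepSet δ (subsetSeq δ w X k) (w k) from rfl,
      mem_stepSet] at hp
    obtain ⟨q, hq, hpq⟩ := hp
    exact hclosed q (subsetSeq_subset hclosed hX k hq) _ hpq

lemma mem_subsetSeq_iff {δ : Q → A → Set Q} {w : ℕ → A} {X : Set Q} {p : Q} :
    ∀ {k}, p ∈ subsetSeq δ w X k ↔ ∃ q ∈ X, p ∈ subsetSeq δ w {q} k
  | 0 => by simp [subsetSeq, eq_comm]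
  | k + 1 => by
    constructor
    · intro hp
      rw [show subsetSeq δ w X (k+1) = stepSet δ (subsetSeq δ w X k) (w k) from rfl,
        mem_stepSet] at hp
      obtain ⟨r, hr, hpr⟩ := hp
      obtain ⟨q, hq, hrq⟩ := mem_subsetSeq_iff.mp hr
      exact ⟨q, hq, mem_stepSet.mpr ⟨r, hrq, hpr⟩⟩
    · rintro ⟨q, hq, hp⟩
      exact subsetSeq_mono (Set.singleton_subset_iff.mpr hq) (k+1) hp

lemma subsetSeq_det {δ : Q → A → Set Q} {Q2 : Set Q}
    (hclosed : ∀ q ∈ Q2, ∀ a, δ q a ⊆ Q2)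
    (hdet : ∀ q ∈ Q2, ∀ a, (δ q a).Subsingleton) {w : ℕ → A} {q : Q} (hq : q ∈ Q2) :
    ∀ k, (subsetSeq δ w {q} k).Subsingleton
  | 0 => Set.subsingleton_singleton
  | k + 1 => by
    intro x hx y hy
    rw [show subsetSeq δ w {q} (k+1) = stepSet δ (subsetSeq δ w {q} k) (w k) from rfl,
      mem_stepSet] at hx hy
    obtain ⟨r1, hr1, hx⟩ := hx
    obtain ⟨r2, hr2, hy⟩ := hy
    have hr : r1 = r2 := subsetSeq_det hclosed hdet hq k hr1 hr2
    subst hr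
    exact hdet r1 (subsetSeq_subset hclosed (Set.singleton_subset_iff.mpr hq) k hr1) _ hx hy

lemma nonempty_of_le {δ : Q → A → Set Q} {w : ℕ → A} {X : Set Q} {k j : ℕ} (h : k ≤ j)
    (hj : (subsetSeq δ w X j).Nonempty) : (subsetSeq δ w X k).Nonempty := by
  induction j with
  | zero => simpa [Nat.le_zero.mp h] using hj
  | succ j ih =>
    rcases Nat.lt_or_ge k (j + 1) with hk | hk
    · apply ih (Nat.lt_succ_iff.mp hk)
      obtain ⟨p, hp⟩ := hj
      rw [show subsetSeq δ w X (j+1) = stepSet δ (subsetSeq δ w X j) (w j) from rfl,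
        mem_stepSet] at hp
      obtain ⟨q, hq, _⟩ := hp
      exact ⟨q, hq⟩
    · have : k = j + 1 := le_antisymm h hk
      subst this; exact hj

lemma exists_path {δ : Q → A → Set Q} {w : ℕ → A} {I : Set Q} :
    ∀ {n : ℕ} {p : Q}, p ∈ subsetSeq δ w I n →
      ∃ σ : ℕ → Q, σ 0 ∈ I ∧ σ n = p ∧ ∀ i < n, σ (i + 1) ∈ δ (σ i) (w i) := by
  intro n
  induction n with
  | zero => exact fun hp => ⟨fun _ => _, hp, rfl, by omega⟩
  | succ n ih =>
    intro p hp
    rw [show subsetSeq δ w I (n+1) = stepSet δ (subsetSeq δ w I n) (w n) from rfl,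
      mem_stepSet] at hp
    obtain ⟨q, hq, hpq⟩ := hp
    obtain ⟨σ, h0, hn, htr⟩ := ih hq
    refine ⟨fun m => if m ≤ n then σ m else p, by simp [h0], by simp, ?_⟩
    intro i hi
    rcases Nat.lt_or_ge i n with h | h
    · simpa [Nat.le_of_lt h, Nat.succ_le_of_lt h] using htr i h
    · have : i = n := by omega
      subst this
      simpa [hn] using hpq

/-- `q` is safe at time `i`: from `q`, the run over the suffix of `w` never visits `F`
and never can take a `δF`-transition. -/
def Safe (δ : Q → A → Set Q) (Q2 F : Set Q) (δF : Set (Q × A × Q)) (w : ℕ → A)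
    (i : ℕ) (q : Q) : Prop :=
  q ∈ Q2 ∧ ∀ k, ∀ p ∈ subsetSeq δ (fun n => w (n + i)) ({q} : Set Q) k,
    p ∉ F ∧ ∀ r ∈ δ p (w (k + i)), (p, w (k + i), r) ∉ δF

lemma Safe.notF {δ : Q → A → Set Q} {Q2 F : Set Q} {δF : Set (Q × A × Q)} {w : ℕ → A}
    {i : ℕ} {q : Q} (h : Safe δ Q2 F δF w i q) : q ∉ F :=
  (h.2 0 q rfl).1

lemma Safe.noδF {δ : Q → A → Set Q} {Q2 F : Set Q} {δF : Set (Q × A × Q)} {w : ℕ → A}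
    {i : ℕ} {q : Q} (h : Safe δ Q2 F δF w i q) {r : Q} (hr : r ∈ δ q (w i)) :
    (q, w i, r) ∉ δF := by
  have := (h.2 0 q rfl).2
  rw [Nat.zero_add] at this
  exact this r hr

lemma Safe.step {δ : Q → A → Set Q} {Q2 F : Set Q} {δF : Set (Q × A × Q)}
    (hclosed : ∀ q ∈ Q2, ∀ a, δ q a ⊆ Q2) {w : ℕ → A} {i : ℕ} {q r : Q}
    (h : Safe δ Q2 F δF w i q) (hr : r ∈ δ q (w i)) : Safe δ Q2 F δF w (i + 1) r := by
  refine ⟨hclosed q h.1 _ hr, ?_⟩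
  have key : ∀ k, subsetSeq δ (fun n => w (n + (i + 1))) {r} k ⊆
      subsetSeq δ (fun n => w (n + i)) {q} (k + 1) := by
    intro k
    induction k with
    | zero =>
      intro p hp
      simp only [subsetSeq, Set.mem_singleton_iff] at hp
      show p ∈ stepSet δ (subsetSeq δ (fun n => w (n + i)) {q} 0) (w (0 + i))
      rw [hp, Nat.zero_add, mem_stepSet]
      exact ⟨q, rfl, hr⟩
    | succ k ih =>
      intro p hp
      rw [show subsetSeq δ (fun n => w (n + (i+1))) {r} (k+1)
          = stepSet δ (subsetSeq δ (fun n => w (n + (i+1))) {r} k) (w (k + (i+1))) from rfl,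
        mem_stepSet] at hp
      obtain ⟨x, hx, hpx⟩ := hp
      show p ∈ stepSet δ (subsetSeq δ (fun n => w (n + i)) {q} (k+1)) (w ((k+1) + i))
      rw [mem_stepSet]
      refine ⟨x, ih hx, ?_⟩
      rwa [show (k+1) + i = k + (i+1) by omega]
  intro k p hp
  have h2 := h.2 (k + 1) p (key k hp)
  rwa [show (k+1) + i = k + (i+1) by omega] at h2

end NcsbAux

namespace NcsbAux

variable {A : Type u} {Q : Type v}

lemma eventually_safe [Finite Q]
    (δ : Q → A → Set Q) (Q2 I F : Set Q) (δF : Set (Q × A × Q))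
    (hclosed : ∀ q ∈ Q2, ∀ a, δ q a ⊆ Q2)
    (hdet : ∀ q ∈ Q2, ∀ a, (δ q a).Subsingleton)
    (w : ℕ → A) (hw : ¬ BuchiLang δ I F δF w)
    (n : ℕ) (X : Set Q) (hX2 : X ⊆ Q2) (hXr : X ⊆ subsetSeq δ w I n) :
    ∃ k, ∀ p ∈ subsetSeq δ (fun m => w (m + n)) X k, Safe δ Q2 F δF w (n + k) p := by
  set w' : ℕ → A := fun m => w (m + n) with hw'
  -- Step 1: all bad times are bounded
  have key : ∃ k0, ∀ j ≥ k0, ∀ p ∈ subsetSeq δ w' X j,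
      p ∉ F ∧ ∀ r ∈ δ p (w (j + n)), (p, w (j + n), r) ∉ δF := by
    by_contra hcon
    push_neg at hcon
    set T : Set ℕ := {j | ∃ p ∈ subsetSeq δ w' X j,
      ¬(p ∉ F ∧ ∀ r ∈ δ p (w (j + n)), (p, w (j + n), r) ∉ δF)} with hT
    have hTub : ∀ k0, ∃ j ∈ T, k0 ≤ j := by
      intro k0
      obtain ⟨j, hj, p, hp, hbad⟩ := hcon k0
      refine ⟨j, ⟨p, hp, fun hcontra => ?_⟩, hj⟩
      obtain ⟨r, hr1, hr2⟩ := hbad hcontra.1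
      exact hcontra.2 r hr1 hr2
    have hTinf : T.Infinite := by
      apply Set.infinite_of_not_bddAbove
      rintro ⟨b, hb⟩
      obtain ⟨j, hj, hjb⟩ := hTub (b + 1)
      exact absurd (hb hj) (by omega)
    have hch : ∀ j ∈ T, ∃ q ∈ X, ∃ p ∈ subsetSeq δ w' ({q} : Set Q) j,
        ¬(p ∉ F ∧ ∀ r ∈ δ p (w (j + n)), (p, w (j + n), r) ∉ δF) := by
      intro j hj
      obtain ⟨p, hp, hbad⟩ := hj
      obtain ⟨q, hq, hpq⟩ := mem_subsetSeq_iff.mp hp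
      exact ⟨q, hq, p, hpq, hbad⟩
    choose qf hqX pf hpmem hbad using hch
    haveI : Infinite T := Set.infinite_coe_iff.mpr hTinf
    obtain ⟨q, hfib⟩ := Finite.exists_infinite_fiber (fun x : T => qf x.1 x.2)
    rw [Set.infinite_coe_iff] at hfib
    set J : Set ℕ := Subtype.val '' ((fun x : T => qf x.1 x.2) ⁻¹' {q}) with hJ
    have hJinf : J.Infinite := hfib.image Set.injOn_subtype_val
    have hJprop : ∀ j ∈ J, ∃ hj : j ∈ T, qf j hj = q := by
      rintro j ⟨⟨j', hj'⟩, hq', rfl⟩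
      exact ⟨hj', hq'⟩
    have hqX' : q ∈ X := by
      obtain ⟨j, hj⟩ := hJinf.nonempty
      obtain ⟨hjT, hqf⟩ := hJprop j hj
      rw [← hqf]; exact hqX j hjT
    have hqQ2 : q ∈ Q2 := hX2 hqX'
    -- the deterministic run from q
    have hne : ∀ k, (subsetSeq δ w' ({q} : Set Q) k).Nonempty := by
      intro k
      obtain ⟨j, hjJ, hjk⟩ := hJinf.exists_gt k
      obtain ⟨hjT, hqf⟩ := hJprop j hjJ
      have : (subsetSeq δ w' ({q} : Set Q) j).Nonempty := by
        refine ⟨pf j hjT, ?_⟩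
        have := hpmem j hjT; rwa [hqf] at this
      exact nonempty_of_le (le_of_lt hjk) this
    choose π' hπ' using hne
    have hsing : ∀ k, ∀ x ∈ subsetSeq δ w' ({q} : Set Q) k, x = π' k :=
      fun k x hx => subsetSeq_det hclosed hdet hqQ2 k hx (hπ' k)
    have hπQ2 : ∀ k, π' k ∈ Q2 := fun k =>
      subsetSeq_subset hclosed (Set.singleton_subset_iff.mpr hqQ2) k (hπ' k)
    have hπtr : ∀ k, π' (k + 1) ∈ δ (π' k) (w (k + n)) := by
      intro k
      have h1 := hπ' (k + 1)
      rw [show subsetSeq δ w' ({q} : Set Q) (k+1)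
          = stepSet δ (subsetSeq δ w' ({q} : Set Q) k) (w' k) from rfl, mem_stepSet] at h1
      obtain ⟨x, hx, hπx⟩ := h1
      rwa [hsing k x hx] at hπx
    have hπ0 : π' 0 = q := (hsing 0 q rfl).symm
    -- prefix from I to q
    obtain ⟨σ, hσ0, hσn, hσtr⟩ := exists_path (hXr hqX')
    set π : ℕ → Q := fun m => if m < n then σ m else π' (m - n) with hπ
    have hπge : ∀ m, n ≤ m → π m = π' (m - n) := by
      intro m hm; simp [hπ, Nat.not_lt.mpr hm]
    have hπI : π 0 ∈ I := by
      rcases Nat.eq_zero_or_pos n with h0 | h0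
      · subst h0
        have : π 0 = q := by rw [hπge 0 le_rfl, hπ0]
        rw [this]
        exact hXr hqX'
      · simp [hπ, h0, hσ0]
    have hπtr' : IsTrace δ w π := by
      intro m
      rcases Nat.lt_or_ge (m + 1) n with h1 | h1
      · have h2 : m < n := by omega
        simp only [hπ]
        rw [if_pos h1, if_pos h2]
        exact hσtr m h2
      · rcases Nat.lt_or_ge m n with h2 | h2
        · have hmn : m + 1 = n := by omega
          have h3 : ¬ (m + 1 < n) := by omega
          simp only [hπ]
          rw [if_neg h3, if_pos h2, show m + 1 - n = 0 from by omega, hπ0, ← hσn, ← hmn]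
          exact hσtr m h2
        · rw [hπge m h2, hπge (m + 1) (by omega),
            show m + 1 - n = (m - n) + 1 by omega]
          have := hπtr (m - n)
          rwa [show m - n + n = m by omega] at this
    have hπacc : BuchiAccT F δF w π := by
      intro N
      obtain ⟨j, hjJ, hjN⟩ := hJinf.exists_gt N
      obtain ⟨hjT, hqf⟩ := hJprop j hjJ
      refine ⟨j + n, by omega, ?_⟩
      have hpj : pf j hjT = π' j := by
        apply hsing
        have := hpmem j hjT; rwa [hqf] at this
      have hbd := hbad j hjT
      have hπm : π (j + n) = π' j := by
        rw [hπge (j + n) (by omega), Nat.add_sub_cancel]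
      push_neg at hbd
      by_cases hFc : pf j hjT ∉ F
      · obtain ⟨r, hr1, hr2⟩ := hbd hFc
        right
        have hreq : r = π' (j + 1) := by
          apply hdet (π' j) (hπQ2 j) (w (j + n))
          · rwa [hpj] at hr1
          · exact hπtr j
        have hπm1 : π (j + n + 1) = π' (j + 1) := by
          rw [hπge (j + n + 1) (by omega), show j + n + 1 - n = j + 1 by omega]
        rw [hπm, hπm1, ← hreq, ← hpj]
        exact hr2
      · left
        rw [hπm, ← hpj]
        exact not_not.mp hFc
    exact hw ⟨π, hπI, hπtr', hπacc⟩
  -- Step 2: conclude safety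
  obtain ⟨k0, hk0⟩ := key
  refine ⟨k0, fun p hp => ⟨subsetSeq_subset hclosed hX2 k0 hp, ?_⟩⟩
  intro k' p' hp'
  have hweq : (fun m => w (m + (n + k0))) = (fun m => w' (m + k0)) := by
    funext m
    simp only [hw']
    congr 1
    omega
  rw [hweq] at hp'
  have hp'' : p' ∈ subsetSeq δ w' X (k0 + k') := by
    rw [← subsetSeq_shift]
    exact subsetSeq_mono (Set.singleton_subset_iff.mpr hp) k' hp'
  have := hk0 (k0 + k') (by omega) p' hp''
  rwa [show k0 + k' + n = k' + (n + k0) by omega] at this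

end NcsbAux

namespace NcsbAux

variable {A : Type u} {Q : Type v}

/-- The deterministic successor `γ₁`. -/
noncomputable def gamma1 (δ : Q → A → Set Q) (Q1 Q2 : Set Q) (m : Macro Q) (a : A) :
    Macro Q :=
  let N' := stepSet δ m.1 a ∩ Q1
  let S' := stepSet δ m.2.2.1 a
  let C' := ((stepSet δ m.1 a ∩ Q2) ∪ stepSet δ m.2.1 a) \ S'
  let B' := if m.2.2.2 = ∅ then C' else stepSet δ m.2.2.2 a ∩ C'
  (N', C', S', B')

/-- The `B`-flushing successor `γ₂`. -/
noncomputable def gamma2 (δ : Q → A → Set Q) (Q1 Q2 : Set Q) (m : Macro Q) (a : A) :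
    Macro Q :=
  let g := gamma1 δ Q1 Q2 m a
  (g.1, g.2.1 \ (g.2.2.1 ∪ g.2.2.2), g.2.2.1 ∪ g.2.2.2, (∅ : Set Q))

/-- The witnessing run: flush whenever it is safe to do so. -/
noncomputable def buildRun (δ : Q → A → Set Q) (Q1 Q2 I F : Set Q) (δF : Set (Q × A × Q))
    (w : ℕ → A) : ℕ → Macro Q
  | 0 => (Q1 ∩ I, Q2 ∩ I, (∅ : Set Q), Q2 ∩ I)
  | i + 1 =>
    let m := buildRun δ Q1 Q2 I F δF w i
    if ∀ q ∈ (gamma1 δ Q1 Q2 m (w i)).2.2.2, Safe δ Q2 F δF w (i + 1) q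
    then gamma2 δ Q1 Q2 m (w i)
    else gamma1 δ Q1 Q2 m (w i)

end NcsbAux

/-- Completeness of NCSB-MaxRank: if `α ∉ L(A)`, then `NCSB-MaxRank(A)` has an
infinite run on `α` visiting macrostates with empty `B`-component infinitely often. -/
theorem ncsb_maxrank_complete [Finite Q]
    (δ : Q → A → Set Q) (Q1 Q2 I F : Set Q) (δF : Set (Q × A × Q))
    (hpart : Q1 = Q2ᶜ)
    (hclosed : ∀ q ∈ Q2, ∀ a, δ q a ⊆ Q2)
    (hdet : ∀ q ∈ Q2, ∀ a, (δ q a).Subsingleton)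
    (hF : F ⊆ Q2)
    (hδF : ∀ p a q, (p, a, q) ∈ δF → q ∈ δ p a ∧ q ∈ Q2)
    (w : ℕ → A) (hw : ¬ BuchiLang δ I F δF w) :
    ∃ R : ℕ → Macro Q, NcsbRun δ Q1 Q2 I F δF w R ∧ NcsbAcc R := by
  classical
  set R := NcsbAux.buildRun δ Q1 Q2 I F δF w with hR
  have hstep : ∀ i, R (i + 1) =
      if ∀ q ∈ (NcsbAux.gamma1 δ Q1 Q2 (R i) (w i)).2.2.2, NcsbAux.Safe δ Q2 F δF w (i + 1) q
      then NcsbAux.gamma2 δ Q1 Q2 (R i) (w i)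
      else NcsbAux.gamma1 δ Q1 Q2 (R i) (w i) := fun i => rfl
  -- the invariant
  have hInv : ∀ i, NcsbState Q1 Q2 F (R i) ∧ (R i).1 ⊆ subsetSeq δ w I i ∧
      (R i).2.1 ⊆ subsetSeq δ w I i ∧
      ∀ q ∈ (R i).2.2.1, NcsbAux.Safe δ Q2 F δF w i q := by
    intro i
    induction i with
    | zero =>
      refine ⟨⟨Set.inter_subset_left, Set.inter_subset_left, ?_, subset_rfl⟩,
        Set.inter_subset_right, Set.inter_subset_right, ?_⟩
      · intro q hq; exact absurd hq (Set.notMem_empty q)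
      · intro q hq; exact absurd hq (Set.notMem_empty q)
    | succ i ih =>
      obtain ⟨⟨hN1, hC2, hS2, hBC⟩, hNr, hCr, hSsafe⟩ := ih
      set g := NcsbAux.gamma1 δ Q1 Q2 (R i) (w i) with hg
      -- facts about γ₁'s components
      have hgN : g.1 = stepSet δ (R i).1 (w i) ∩ Q1 := rfl
      have hgS : g.2.2.1 = stepSet δ (R i).2.2.1 (w i) := rfl
      have hgC : g.2.1 = ((stepSet δ (R i).1 (w i) ∩ Q2) ∪ stepSet δ (R i).2.1 (w i))
          \ stepSet δ (R i).2.2.1 (w i) := rfl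
      have hgB : g.2.2.2 = if (R i).2.2.2 = ∅ then g.2.1
          else stepSet δ (R i).2.2.2 (w i) ∩ g.2.1 := rfl
      have hS'safe : ∀ p ∈ g.2.2.1, NcsbAux.Safe δ Q2 F δF w (i + 1) p := by
        intro p hp
        rw [hgS, NcsbAux.mem_stepSet] at hp
        obtain ⟨x, hx, hpx⟩ := hp
        exact NcsbAux.Safe.step hclosed (hSsafe x hx) hpx
      have hC'Q2 : g.2.1 ⊆ Q2 := by
        intro p hp
        rw [hgC] at hp
        rcases hp.1 with h | h
        · exact h.2
        · rw [NcsbAux.mem_stepSet] at h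
          obtain ⟨x, hx, hpx⟩ := h
          exact hclosed x (hC2 hx) _ hpx
      have hC'r : g.2.1 ⊆ subsetSeq δ w I (i + 1) := by
        intro p hp
        rw [hgC] at hp
        rcases hp.1 with h | h
        · exact NcsbAux.stepSet_mono hNr (w i) h.1
        · exact NcsbAux.stepSet_mono hCr (w i) h
      have hB'C' : g.2.2.2 ⊆ g.2.1 := by
        rw [hgB]
        split_ifs
        · exact subset_rfl
        · exact Set.inter_subset_right
      have hN'1 : g.1 ⊆ Q1 := by rw [hgN]; exact Set.inter_subset_right
      have hN'r : g.1 ⊆ subsetSeq δ w I (i + 1) := by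
        rw [hgN]
        exact subset_trans Set.inter_subset_left (NcsbAux.stepSet_mono hNr (w i))
      have hS'sub : g.2.2.1 ⊆ Q2 \ F :=
        fun p hp => ⟨(hS'safe p hp).1, (hS'safe p hp).notF⟩
      rw [hstep i]
      split_ifs with hcnd
      · -- flush step γ₂
        refine ⟨⟨hN'1, subset_trans Set.diff_subset hC'Q2, ?_, ?_⟩, hN'r,
          subset_trans Set.diff_subset hC'r, ?_⟩
        · intro p hp
          rcases hp with hp | hp
          · exact hS'sub hp
          · exact ⟨(hcnd p hp).1, (hcnd p hp).notF⟩
        · intro p hp; exact absurd hp (Set.notMem_empty p)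
        · intro p hp
          rcases hp with hp | hp
          · exact hS'safe p hp
          · exact hcnd p hp
      · -- plain step γ₁
        exact ⟨⟨hN'1, hC'Q2, hS'sub, hB'C'⟩, hN'r, hC'r, hS'safe⟩
  refine ⟨R, ⟨rfl, fun i => (hInv i).1, ?_⟩, ?_⟩
  · -- the successor relation holds at every step
    intro i
    constructor
    · rintro ⟨p, hpS, q', hq', hqF⟩
      exact ((hInv i).2.2.2 p hpS).noδF hq' hqF
    · by_cases hcnd : ∀ q ∈ (NcsbAux.gamma1 δ Q1 Q2 (R i) (w i)).2.2.2,
          NcsbAux.Safe δ Q2 F δF w (i + 1) q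
      · rw [hstep i, if_pos hcnd]
        have hBF : (NcsbAux.gamma1 δ Q1 Q2 (R i) (w i)).2.2.2 ∩ F = ∅ := by
          ext x
          simp only [Set.mem_inter_iff, Set.mem_empty_iff_false, iff_false, not_and]
          intro hx
          exact ((hcnd x hx).notF)
        exact Or.inr ⟨hBF, rfl⟩
      · rw [hstep i, if_neg hcnd]
        exact Or.inl rfl
  · -- acceptance : B is empty infinitely often
    intro n
    by_contra hcon
    push_neg at hcon
    have hBQ2 : (R n).2.2.2 ⊆ Q2 := subset_trans (hInv n).1.2.2.2 (hInv n).1.2.1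
    have hBr : (R n).2.2.2 ⊆ subsetSeq δ w I n :=
      subset_trans (hInv n).1.2.2.2 (hInv n).2.2.1
    obtain ⟨k, hk⟩ := NcsbAux.eventually_safe δ Q2 I F δF hclosed hdet w hw n _ hBQ2 hBr
    have hnotγ2 : ∀ t, n ≤ t →
        ¬ (∀ q ∈ (NcsbAux.gamma1 δ Q1 Q2 (R t) (w t)).2.2.2,
            NcsbAux.Safe δ Q2 F δF w (t + 1) q) := by
      intro t ht hcnd
      have hne := hcon (t + 1) (by omega)
      rw [hstep t, if_pos hcnd] at hne
      exact Set.not_nonempty_empty hne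
    have hsub : ∀ j, (R (n + j)).2.2.2 ⊆
        subsetSeq δ (fun m => w (m + n)) ((R n).2.2.2) j := by
      intro j
      induction j with
      | zero => exact subset_rfl
      | succ j ih =>
        have ht : n ≤ n + j := by omega
        have h1 := hnotγ2 (n + j) ht
        rw [show n + (j + 1) = (n + j) + 1 by omega, hstep (n + j), if_neg h1]
        have hBne : (R (n + j)).2.2.2 ≠ ∅ :=
          Set.nonempty_iff_ne_empty.mp (hcon (n + j) ht)
        show (NcsbAux.gamma1 δ Q1 Q2 (R (n + j)) (w (n + j))).2.2.2 ⊆ _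
        rw [show (NcsbAux.gamma1 δ Q1 Q2 (R (n + j)) (w (n + j))).2.2.2
            = if (R (n + j)).2.2.2 = ∅
              then (NcsbAux.gamma1 δ Q1 Q2 (R (n + j)) (w (n + j))).2.1
              else stepSet δ (R (n + j)).2.2.2 (w (n + j)) ∩
                (NcsbAux.gamma1 δ Q1 Q2 (R (n + j)) (w (n + j))).2.1 from rfl,
          if_neg hBne]
        refine subset_trans Set.inter_subset_left ?_
        have : stepSet δ ((R (n + j)).2.2.2) (w (n + j)) ⊆
            stepSet δ (subsetSeq δ (fun m => w (m + n)) ((R n).2.2.2) j) (w (j + n)) := by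
          rw [show j + n = n + j by omega]
          exact NcsbAux.stepSet_mono ih (w (n + j))
        exact this
    -- at time n + k the flush condition holds : contradiction
    apply hnotγ2 (n + k) (by omega)
    intro q hq
    have hBne : (R (n + k)).2.2.2 ≠ ∅ :=
      Set.nonempty_iff_ne_empty.mp (hcon (n + k) (by omega))
    rw [show (NcsbAux.gamma1 δ Q1 Q2 (R (n + k)) (w (n + k))).2.2.2
        = if (R (n + k)).2.2.2 = ∅
          then (NcsbAux.gamma1 δ Q1 Q2 (R (n + k)) (w (n + k))).2.1
          else stepSet δ (R (n + k)).2.2.2 (w (n + k)) ∩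
            (NcsbAux.gamma1 δ Q1 Q2 (R (n + k)) (w (n + k))).2.1 from rfl,
      if_neg hBne] at hq
    obtain ⟨x, hx, hqx⟩ := NcsbAux.mem_stepSet.mp hq.1
    have hxsafe : NcsbAux.Safe δ Q2 F δF w (n + k) x := hk x (hsub k hx)
    have := NcsbAux.Safe.step hclosed hxsafe hqx
    rwa [show n + k + 1 = n + (k + 1) by omega] at this
end

section
/- In the pruning argument for co-Büchi macrostate reduction: any chain of states p_1' , p_2', … arising from repeatedly replacing a trace by a ⊑-larger trace at strictly increasing positions contains pairwise distinct replacement states, and hence is finite (bounded by |Q|). -/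
attribute [local instance] Classical.propDecidable

universe u v

variable {A : Type u} {Q : Type v}

lemma trace_reaches {δ : Q → A → Set Q} {w : ℕ → A} {π : ℕ → Q}
    (h : IsTrace δ w π) {a b : ℕ} (hab : a ≤ b) : Reaches δ (π a) (π b) := by
  induction b, hab using Nat.le_induction with
  | base => exact Relation.ReflTransGen.refl
  | succ b hab ih => exact ih.tail ⟨w b, h b⟩

/-- In the pruning argument, a chain of replacement states obtained by repeatedly
replacing a trace by a `⊑`-larger trace at strictly increasing positions consists
of pairwise distinct states, and hence its length is bounded by `|Q|`. -/
theorem pruning_chain_finite [Fintype Q]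
    (δ : Q → A → Set Q) (F : Set Q) (w : ℕ → A)
    (n : ℕ) (π : ℕ → ℕ → Q) (ℓ : ℕ → ℕ)
    (hℓ : StrictMono ℓ)
    (htr : ∀ i, IsTrace δ w (π i))
    (hchain : ∀ i < n, SqSub δ F (π i (ℓ i)) (π (i + 1) (ℓ i)))
    (hne : ∀ i < n, π i (ℓ i) ≠ π (i + 1) (ℓ i)) :
    (∀ i < n, ∀ j < n, i ≠ j → π (i + 1) (ℓ i) ≠ π (j + 1) (ℓ j)) ∧
      n ≤ Fintype.card Q := by
  have key : ∀ i < n, ∀ j < n, i < j → π (i + 1) (ℓ i) ≠ π (j + 1) (ℓ j) := by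
    intro i hi j hj hij heq
    have hreach : ∀ k, i < k → k < n → Reaches δ (π (i + 1) (ℓ i)) (π k (ℓ k)) := by
      intro k
      induction k with
      | zero => omega
      | succ k ih =>
        intro hik hkn
        rcases Nat.lt_or_ge i k with h | h
        · have hk : k < n := by omega
          exact ((ih h hk).trans (hchain k hk).2.1).trans
            (trace_reaches (htr (k + 1)) (hℓ.monotone (Nat.le_succ k)))
        · have hik' : i = k := by omega
          subst hik'
          exact trace_reaches (htr (i + 1)) (hℓ.monotone (Nat.le_succ i))
    have h1 : Reaches δ (π (j + 1) (ℓ j)) (π j (ℓ j)) := by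
      rw [← heq]; exact hreach j hij hj
    rcases (hchain j hj).2.2 with h2 | h2
    · exact h2 h1
    · exact hne j hj h2
  have hdist : ∀ i < n, ∀ j < n, i ≠ j → π (i + 1) (ℓ i) ≠ π (j + 1) (ℓ j) := by
    intro i hi j hj hij
    rcases Nat.lt_or_ge i j with h | h
    · exact key i hi j hj h
    · exact fun e => key j hj i hi (by omega) e.symm
  refine ⟨hdist, ?_⟩
  have hinj : Function.Injective (fun i : Fin n => π (i + 1) (ℓ i)) := by
    intro i j hij
    by_contra h
    exact hdist i i.isLt j j.isLt (fun e => h (Fin.ext e)) hij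
  simpa using Fintype.card_le_of_injective _ hinj
end

section
/- If p is directly simulated by q in a Büchi automaton, then every infinite trace from p over a word w that from some point on visits only accepting states is matched by a trace from q over w that from the same point on visits only accepting states. -/
attribute [local instance] Classical.propDecidable

universe u v

variable {A : Type u} {Q : Type v}

/-- If `p` is directly simulated by `q`, then every trace from `p` over `w` that
from position `n` on visits only accepting states is matched by a trace from `q`
over `w` that from position `n` on visits only accepting states. -/
theorem direct_sim_matches_eventually_accepting
    (δ : Q → A → Set Q) (F : Set Q) (p q : Q)
    (h : DirectSim δ F p q)
    (w : ℕ → A) (π : ℕ → Q) (hπ0 : π 0 = p) (hπ : IsTrace δ w π)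
    (n : ℕ) (hn : ∀ ℓ ≥ n, π ℓ ∈ F) :
    ∃ π', π' 0 = q ∧ IsTrace δ w π' ∧ ∀ ℓ ≥ n, π' ℓ ∈ F := by
  obtain ⟨R, hR, hRpq⟩ := h
  have step : ∀ i (q' : Q), ∃ q'', R (π i) q' → q'' ∈ δ q' (w i) ∧ R (π (i + 1)) q'' := by
    intro i q'
    by_cases hq' : R (π i) q'
    · obtain ⟨q'', h1, h2⟩ := (hR _ _ hq').2 (w i) _ (hπ i)
      exact ⟨q'', fun _ => ⟨h1, h2⟩⟩
    · exact ⟨q, fun hc => absurd hc hq'⟩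
  choose f hf using step
  set π' : ℕ → Q := fun i => Nat.rec q (fun i x => f i x) i with hπ'
  have hR' : ∀ i, R (π i) (π' i) := by
    intro i
    induction i with
    | zero => simpa [hπ', hπ0] using hRpq
    | succ i ih => exact (hf i (π' i) ih).2
  exact ⟨π', rfl, fun i => (hf i (π' i) (hR' i)).1,
    fun ℓ hℓ => (hR _ _ (hR' ℓ)).1 (hn ℓ hℓ)⟩
end

section
/- The Miyano-Hayashi construction MiHay_θ with θ the identity function, applied to any co-Büchi automaton A_c, yields a deterministic Büchi automaton recognizing Σ^ω \ L(A_c). -/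
attribute [local instance] Classical.propDecidable

universe u v

variable {A : Type u} {Q : Type v}

/-! ### Auxiliary machinery for the Miyano–Hayashi correctness proof -/

lemma antitone_inter_nonempty [Finite Q] (D : ℕ → Set Q)
    (hanti : ∀ k, D (k + 1) ⊆ D k) (hne : ∀ k, (D k).Nonempty) :
    ∃ q, ∀ k, q ∈ D k := by
  have hmono : Antitone D := antitone_nat_of_succ_le hanti
  by_contra h
  push_neg at h
  have : Fintype Q := Fintype.ofFinite Q
  choose f hf using h
  obtain ⟨q, hq⟩ := hne (Finset.univ.sup f)
  exact hf q (hmono (Finset.le_sup (Finset.mem_univ q)) hq)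

/-- A finite trace of length `k` starting at `q` at time `m`, staying inside `ρ`. -/
def MhChain (δ : Q → A → Set Q) (w : ℕ → A) (ρ : ℕ → Set Q) (m k : ℕ) (q : Q) : Prop :=
  ∃ π : ℕ → Q, π 0 = q ∧ (∀ j, j < k → π (j + 1) ∈ δ (π j) (w (m + j))) ∧
    ∀ j, j ≤ k → π j ∈ ρ (m + j)

lemma mhChain_mono (δ : Q → A → Set Q) (w : ℕ → A) (ρ : ℕ → Set Q) {m k : ℕ} {q : Q}
    (h : MhChain δ w ρ m (k + 1) q) : MhChain δ w ρ m k q := by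
  obtain ⟨π, h0, hs, hm⟩ := h
  exact ⟨π, h0, fun j hj => hs j (by omega), fun j hj => hm j (by omega)⟩

lemma mhChain_exists (δ : Q → A → Set Q) (w : ℕ → A) (ρ : ℕ → Set Q)
    (hstep : ∀ m, ρ (m + 1) ⊆ stepSet δ (ρ m) (w m))
    (hne : ∀ m, (ρ m).Nonempty) (k : ℕ) : ∀ m, ∃ q, MhChain δ w ρ m k q := by
  induction k with
  | zero =>
    intro m
    obtain ⟨q, hq⟩ := hne m
    refine ⟨q, fun _ => q, rfl, fun j hj => absurd hj (Nat.not_lt_zero j), fun j hj => ?_⟩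
    obtain rfl := Nat.le_zero.mp hj
    exact hq
  | succ k ih =>
    intro m
    obtain ⟨q', π, hπ0, hπs, hπm⟩ := ih (m + 1)
    have hq' : q' ∈ ρ (m + 1) := by
      have := hπm 0 (Nat.zero_le k); rwa [hπ0] at this
    have hstepm := hstep m hq'
    obtain ⟨q, hq, hδ⟩ := Set.mem_iUnion₂.mp hstepm
    refine ⟨q, fun j => Nat.casesOn j q (fun j' => π j'), rfl, ?_, ?_⟩
    · intro j hj
      cases j with
      | zero => show π 0 ∈ δ q (w (m + 0)); rw [hπ0]; exact hδ
      | succ j' =>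
        have := hπs j' (by omega)
        have e : m + 1 + j' = m + (j' + 1) := by omega
        rwa [e] at this
    · intro j hj
      cases j with
      | zero => exact hq
      | succ j' =>
        have := hπm j' (by omega)
        have e : m + 1 + j' = m + (j' + 1) := by omega
        rwa [e] at this

/-- König-style lemma: a sequence of nonempty sets linked by `stepSet` contains an
infinite trace. -/
lemma mhKonig [Finite Q] (δ : Q → A → Set Q) (w : ℕ → A) (ρ : ℕ → Set Q)
    (hstep : ∀ m, ρ (m + 1) ⊆ stepSet δ (ρ m) (w m))
    (hne : ∀ m, (ρ m).Nonempty) :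
    ∃ π, IsTrace δ w π ∧ ∀ m, π m ∈ ρ m := by
  have hgood0 : ∃ q, ∀ k, MhChain δ w ρ 0 k q :=
    antitone_inter_nonempty (fun k => {q | MhChain δ w ρ 0 k q})
      (fun k q hq => mhChain_mono δ w ρ hq)
      (fun k => mhChain_exists δ w ρ hstep hne k 0)
  have H : ∀ m (q : Q), (∀ k, MhChain δ w ρ m k q) →
      ∃ q', q' ∈ δ q (w m) ∧ ∀ k, MhChain δ w ρ (m + 1) k q' := by
    intro m q hq
    have key : ∃ q', ∀ k, q' ∈ {p | p ∈ δ q (w m) ∧ MhChain δ w ρ (m + 1) k p} := by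
      refine antitone_inter_nonempty _ (fun k p hp => ⟨hp.1, mhChain_mono δ w ρ hp.2⟩)
        (fun k => ?_)
      obtain ⟨σ, hσ0, hσs, hσm⟩ := hq (k + 1)
      refine ⟨σ 1, ?_, fun j => σ (j + 1), rfl, ?_, ?_⟩
      · have := hσs 0 (by omega)
        rwa [hσ0] at this
      · intro j hj
        have := hσs (j + 1) (by omega)
        have e : m + (j + 1) = m + 1 + j := by omega
        rwa [e] at this
      · intro j hj
        have := hσm (j + 1) (by omega)
        have e : m + (j + 1) = m + 1 + j := by omega
        rwa [e] at this
    obtain ⟨q', hq'⟩ := key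
    exact ⟨q', (hq' 0).1, fun k => (hq' k).2⟩
  choose! next h1 h2 using H
  obtain ⟨q0, hq0⟩ := hgood0
  let π : ℕ → Q := fun m => Nat.rec q0 (fun m p => next m p) m
  have hg : ∀ m, ∀ k, MhChain δ w ρ m k (π m) := by
    intro m
    induction m with
    | zero => exact hq0
    | succ m ih => exact h2 m (π m) ih
  refine ⟨π, fun i => h1 i (π i) (hg i), fun m => ?_⟩
  obtain ⟨σ, hσ0, -, hσm⟩ := hg m 0
  have := hσm 0 (le_refl 0)
  rwa [hσ0] at this

lemma mhRun_fst_succ (δ : Q → A → Set Q) (F I : Set Q) (w : ℕ → A) (m : ℕ) :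
    (mhRun δ F id I w (m + 1)).1 = stepSet δ (mhRun δ F id I w m).1 (w m) := rfl

lemma mhRun_snd_succ (δ : Q → A → Set Q) (F I : Set Q) (w : ℕ → A) (m : ℕ) :
    (mhRun δ F id I w (m + 1)).2 =
      if (mhRun δ F id I w m).2 = ∅ then (mhRun δ F id I w (m + 1)).1 \ F
      else (stepSet δ (mhRun δ F id I w m).2 (w m) ∩ (mhRun δ F id I w (m + 1)).1) \ F := by
  by_cases h : (mhRun δ F id I w m).2 = ∅ <;> simp [mhRun, mhStep, h]

lemma mhRun_snd_subset (δ : Q → A → Set Q) (F I : Set Q) (w : ℕ → A) (m : ℕ) :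
    (mhRun δ F id I w m).2 ⊆ (mhRun δ F id I w m).1 := by
  cases m with
  | zero => exact Set.diff_subset
  | succ m =>
    rw [mhRun_snd_succ]
    by_cases h : (mhRun δ F id I w m).2 = ∅
    · rw [if_pos h]; exact Set.diff_subset
    · rw [if_neg h]; exact fun q hq => hq.1.2

lemma mhRun_snd_disj (δ : Q → A → Set Q) (F I : Set Q) (w : ℕ → A) (m : ℕ) :
    ∀ q ∈ (mhRun δ F id I w m).2, q ∉ F := by
  cases m with
  | zero => exact fun q hq => hq.2
  | succ m =>
    rw [mhRun_snd_succ]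
    by_cases h : (mhRun δ F id I w m).2 = ∅
    · rw [if_pos h]; exact fun q hq => hq.2
    · rw [if_neg h]; exact fun q hq => hq.2

/-- The (deterministic) Miyano–Hayashi construction with the identity adjustment
function recognizes exactly the complement of the language of the co-BA. -/
theorem mihay_id_correct [Finite Q]
    (δ : Q → A → Set Q) (I F : Set Q) :
    ∀ w : ℕ → A, MhAccepts δ F id I w ↔ ¬ CoBuchiLang δ I F w := by
  intro w
  constructor
  · -- MhAccepts → no accepting trace
    rintro hacc ⟨π, hI, htr, n, hn⟩
    have hSmem : ∀ m, π m ∈ (mhRun δ F id I w m).1 := by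
      intro m
      induction m with
      | zero => exact hI
      | succ m ih =>
        rw [mhRun_fst_succ]
        exact Set.mem_biUnion ih (htr m)
    obtain ⟨m, hm, hBm⟩ := hacc n
    have key : ∀ j, π (m + 1 + j) ∈ (mhRun δ F id I w (m + 1 + j)).2 := by
      intro j
      induction j with
      | zero =>
        show π (m + 1) ∈ (mhRun δ F id I w (m + 1)).2
        rw [mhRun_snd_succ, if_pos hBm]
        exact ⟨hSmem (m + 1), hn (m + 1) (by omega)⟩
      | succ j ih =>
        have hne : (mhRun δ F id I w (m + 1 + j)).2 ≠ ∅ := by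
          intro h; rw [h] at ih; exact ih
        show π (m + 1 + j + 1) ∈ (mhRun δ F id I w (m + 1 + j + 1)).2
        rw [mhRun_snd_succ, if_neg hne]
        exact ⟨⟨Set.mem_biUnion ih (htr (m + 1 + j)), hSmem (m + 1 + j + 1)⟩,
          hn (m + 1 + j + 1) (by omega)⟩
    obtain ⟨k, hk, hBk⟩ := hacc (m + 2)
    have hkey := key (k - (m + 1))
    rw [(by omega : m + 1 + (k - (m + 1)) = k), hBk] at hkey
    exact hkey
  · -- no accepting trace → MhAccepts
    intro hnco
    by_contra hnacc
    apply hnco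
    unfold MhAccepts at hnacc
    push_neg at hnacc
    obtain ⟨n, hn⟩ := hnacc
    set ρ : ℕ → Set Q :=
      fun m => if m < n then (mhRun δ F id I w m).1 else (mhRun δ F id I w m).2 with hρ
    have hρpos : ∀ m, m < n → ρ m = (mhRun δ F id I w m).1 := fun m h => if_pos h
    have hρneg : ∀ m, ¬ m < n → ρ m = (mhRun δ F id I w m).2 := fun m h => if_neg h
    have hstep : ∀ m, ρ (m + 1) ⊆ stepSet δ (ρ m) (w m) := by
      intro m q hq
      by_cases hm : m < n
      · rw [hρpos m hm]
        by_cases hm1 : m + 1 < n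
        · rw [hρpos (m + 1) hm1, mhRun_fst_succ] at hq
          exact hq
        · rw [hρneg (m + 1) hm1] at hq
          have := mhRun_snd_subset δ F I w (m + 1) hq
          rwa [mhRun_fst_succ] at this
      · have hm1 : ¬ m + 1 < n := by omega
        rw [hρneg m hm]
        rw [hρneg (m + 1) hm1, mhRun_snd_succ, if_neg (Set.nonempty_iff_ne_empty.mp (hn m (by omega)))] at hq
        exact hq.1.1
    have hup : ∀ m, n ≤ m → (ρ m).Nonempty := by
      intro m hm
      rw [hρneg m (by omega)]
      exact hn m hm
    have hback : ∀ m, (ρ (m + 1)).Nonempty → (ρ m).Nonempty := by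
      rintro m ⟨q, hq⟩
      obtain ⟨p, hp, -⟩ := Set.mem_iUnion₂.mp (hstep m hq)
      exact ⟨p, hp⟩
    have hne : ∀ m, (ρ m).Nonempty := by
      have hdown : ∀ j, (ρ (n - j)).Nonempty := by
        intro j
        induction j with
        | zero => exact hup n (le_refl n)
        | succ j ih =>
          by_cases h : n - j = 0
          · have e : n - (j + 1) = n - j := by omega
            rw [e]; exact ih
          · have e : n - (j + 1) + 1 = n - j := by omega
            apply hback
            rw [e]; exact ih
      intro m
      by_cases hm : n ≤ m
      · exact hup m hm
      · have e : n - (n - m) = m := by omega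
        have := hdown (n - m)
        rwa [e] at this
    obtain ⟨π, htr, hmem⟩ := mhKonig δ w ρ hstep hne
    refine ⟨π, ?_, htr, n, fun m hm => ?_⟩
    · have h0 := hmem 0
      by_cases hpos : 0 < n
      · rw [hρpos 0 hpos] at h0
        exact h0
      · rw [hρneg 0 hpos] at h0
        exact h0.1
    · have hρm := hmem m
      rw [hρneg m (by omega)] at hρm
      exact mhRun_snd_disj δ F I w m (π m) hρm
end
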